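/- arXiv:1207.6926 — 9 statements merged into one kernel-verified Lean document; each statement's English description precedes it below -/
import Mathlib

section
/- Let n be a positive integer and let A, B, C be complex n×n positive semidefinite matrices. Then the matrix A·tr(BC) + C·tr(BA) − A B C − C B A is positive semidefinite (in particular it is Hermitian). -/
open scoped ComplexOrder

open Matrix in
/-- Cauchy–Schwarz for a PSD matrix. -/
lemma aux_cs {n : ℕ} {A : Matrix (Fin n) (Fin n) ℂ} (hA : A.PosSemidef)
    (y x : Fin n → ℂ) :
    ‖star y ⬝ᵥ A *ᵥ x‖ ^ 2 ≤ (star y ⬝ᵥ A *ᵥ y).re * (star x ⬝ᵥ A *ᵥ x).re := by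
  obtain ⟨P, rfl⟩ : ∃ P : Matrix (Fin n) (Fin n) ℂ, A = Pᴴ * P :=
    by open scoped MatrixOrder in exact CStarAlgebra.nonneg_iff_eq_star_mul_self.mp hA.nonneg
  have key : ∀ u w : Fin n → ℂ, star u ⬝ᵥ (Pᴴ * P) *ᵥ w = star (P *ᵥ u) ⬝ᵥ (P *ᵥ w) := by
    intro u w
    rw [← Matrix.mulVec_mulVec, Matrix.dotProduct_mulVec, ← Matrix.star_mulVec]
  rw [key y x, key y y, key x x]
  set u := (WithLp.equiv 2 (Fin n → ℂ)).symm (P *ᵥ y) with hu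
  set w := (WithLp.equiv 2 (Fin n → ℂ)).symm (P *ᵥ x) with hw
  have h1 : star (P *ᵥ y) ⬝ᵥ (P *ᵥ x) = (inner ℂ u w : ℂ) :=
    by rw [dotProduct_comm]; rfl
  have h2 : star (P *ᵥ y) ⬝ᵥ (P *ᵥ y) = (inner ℂ u u : ℂ) :=
    by rw [dotProduct_comm]; rfl
  have h3 : star (P *ᵥ x) ⬝ᵥ (P *ᵥ x) = (inner ℂ w w : ℂ) :=
    by rw [dotProduct_comm]; rfl
  rw [h1, h2, h3]
  have := norm_inner_le_norm (𝕜 := ℂ) u w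
  have hu2 : ((inner ℂ u u : ℂ)).re = ‖u‖ ^ 2 := by simpa using inner_self_eq_norm_sq (𝕜 := ℂ) u
  have hw2 : ((inner ℂ w w : ℂ)).re = ‖w‖ ^ 2 := by simpa using inner_self_eq_norm_sq (𝕜 := ℂ) w
  rw [hu2, hw2]
  calc ‖(inner ℂ u w : ℂ)‖ ^ 2 ≤ (‖u‖ * ‖w‖) ^ 2 := by
        apply pow_le_pow_left₀ (norm_nonneg _) this _
    _ = ‖u‖ ^ 2 * ‖w‖ ^ 2 := by ring

open Matrix in
lemma aux_vecMul_conjT {n : ℕ} (v : Fin n → ℂ) (N : Matrix (Fin n) (Fin n) ℂ) (i : Fin n) :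
    (v ᵥ* Nᴴ) i = v ⬝ᵥ star (N i) := by
  simp [Matrix.vecMul, dotProduct, Matrix.conjTranspose_apply]

open Matrix in
lemma aux_mulVec {n : ℕ} (N C : Matrix (Fin n) (Fin n) ℂ) (x : Fin n → ℂ) (i : Fin n) :
    ((N * C) *ᵥ x) i = N i ⬝ᵥ (C *ᵥ x) := by
  simp only [Matrix.mulVec, Matrix.mul_apply, dotProduct, Finset.sum_mul,
    Finset.mul_sum]
  rw [Finset.sum_comm]
  simp [mul_assoc]

open Matrix in
lemma aux_herm {n : ℕ} {A : Matrix (Fin n) (Fin n) ℂ} (hA : A.IsHermitian) (y x : Fin n → ℂ) :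
    star y ⬝ᵥ A *ᵥ x = star (star x ⬝ᵥ A *ᵥ y) := by
  rw [Matrix.star_dotProduct, Matrix.star_mulVec, hA.eq, ← Matrix.dotProduct_mulVec]

open Matrix in
lemma aux_expand {n : ℕ} (A C N : Matrix (Fin n) (Fin n) ℂ) (x : Fin n → ℂ) :
    star x ⬝ᵥ (A * (Nᴴ * N) * C) *ᵥ x
      = ∑ i, (star x ⬝ᵥ A *ᵥ star (N i)) * (N i ⬝ᵥ (C *ᵥ x)) := by
  have h : A * (Nᴴ * N) * C = (A * Nᴴ) * (N * C) := by
    simp only [Matrix.mul_assoc]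
  rw [h, ← Matrix.mulVec_mulVec, Matrix.dotProduct_mulVec]
  show ∑ i, (star x ᵥ* (A * Nᴴ)) i * ((N * C) *ᵥ x) i = _
  apply Finset.sum_congr rfl
  intro i _
  rw [← Matrix.vecMul_vecMul, aux_vecMul_conjT, aux_mulVec, Matrix.dotProduct_mulVec (star x) A]

open Matrix in
lemma aux_trace {n : ℕ} (C N : Matrix (Fin n) (Fin n) ℂ) :
    (Nᴴ * N * C).trace = ∑ i, N i ⬝ᵥ (C *ᵥ star (N i)) := by
  rw [Matrix.mul_assoc, Matrix.trace_mul_comm]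
  apply Finset.sum_congr rfl
  intro i _
  rw [← aux_mulVec]
  simp [Matrix.mul_apply, Matrix.mulVec, dotProduct, Matrix.conjTranspose_apply]

lemma aux_term (p q s t a c : ℂ) (hp : 0 ≤ p) (hq : 0 ≤ q) (hs : 0 ≤ s) (ht : 0 ≤ t)
    (ha : ‖a‖ ^ 2 ≤ p.re * s.re) (hc : ‖c‖ ^ 2 ≤ q.re * t.re) :
    0 ≤ q * s + p * t - star a * c - star c * a := by
  rw [Complex.nonneg_iff] at hp hq hs ht ⊢
  have ha' : a.re ^ 2 + a.im ^ 2 ≤ p.re * s.re := by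
    have : ‖a‖ ^ 2 = a.re ^ 2 + a.im ^ 2 := by
      rw [Complex.sq_norm, Complex.normSq_apply]; ring
    linarith [this ▸ ha]
  have hc' : c.re ^ 2 + c.im ^ 2 ≤ q.re * t.re := by
    have : ‖c‖ ^ 2 = c.re ^ 2 + c.im ^ 2 := by
      rw [Complex.sq_norm, Complex.normSq_apply]; ring
    linarith [this ▸ hc]
  constructor
  · simp only [Complex.sub_re, Complex.add_re, Complex.mul_re, Complex.star_def,
      Complex.conj_re, Complex.conj_im, ← hp.2, ← hq.2, ← hs.2, ← ht.2]
    ring_nf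
    nlinarith [sq_nonneg (q.re * s.re - p.re * t.re), sq_nonneg (a.re * c.im - a.im * c.re),
      sq_nonneg (a.re * c.re + a.im * c.im - q.re * s.re), sq_nonneg (a.re * c.re + a.im * c.im - p.re * t.re),
      mul_nonneg hq.1 hs.1, mul_nonneg hp.1 ht.1, mul_nonneg (mul_nonneg hp.1 hs.1) (mul_nonneg hq.1 ht.1)]
  · simp only [Complex.sub_im, Complex.add_im, Complex.mul_im, Complex.star_def,
      Complex.conj_re, Complex.conj_im, ← hp.2, ← hq.2, ← hs.2, ← ht.2]
    ring

open Matrix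

theorem stmt_0 (n : ℕ) (hn : 0 < n) (A B C : Matrix (Fin n) (Fin n) ℂ)
    (hA : A.PosSemidef) (hB : B.PosSemidef) (hC : C.PosSemidef) :
    ((B * C).trace • A + (B * A).trace • C - A * B * C - C * B * A).PosSemidef := by
  have htr1 : star (B * C).trace = (B * C).trace := by
    rw [← Matrix.trace_conjTranspose, Matrix.conjTranspose_mul, hC.1.eq,
      hB.1.eq, Matrix.trace_mul_comm]
  have htr2 : star (B * A).trace = (B * A).trace := by
    rw [← Matrix.trace_conjTranspose, Matrix.conjTranspose_mul, hA.1.eq,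
      hB.1.eq, Matrix.trace_mul_comm]
  refine Matrix.posSemidef_iff_dotProduct_mulVec.mpr ⟨?_, ?_⟩
  · show _ = _
    simp only [Matrix.conjTranspose_sub, Matrix.conjTranspose_add, Matrix.conjTranspose_smul,
      Matrix.conjTranspose_mul, hA.1.eq, hB.1.eq, hC.1.eq,
      htr1, htr2, Matrix.mul_assoc]
    abel
  · obtain ⟨N, rfl⟩ : ∃ N : Matrix (Fin n) (Fin n) ℂ, B = Nᴴ * N :=
      by open scoped MatrixOrder in exact CStarAlgebra.nonneg_iff_eq_star_mul_self.mp hB.nonneg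
    intro x
    rw [Matrix.sub_mulVec, Matrix.sub_mulVec, Matrix.add_mulVec, Matrix.smul_mulVec,
      Matrix.smul_mulVec, dotProduct_sub, dotProduct_sub,
      dotProduct_add, dotProduct_smul, dotProduct_smul]
    rw [aux_trace C N, aux_trace A N, aux_expand A C N x, aux_expand C A N x,
      smul_eq_mul, smul_eq_mul, Finset.sum_mul, Finset.sum_mul]
    simp only [← Finset.sum_sub_distrib, ← Finset.sum_add_distrib]
    apply Finset.sum_nonneg
    intro i _
    rw [aux_herm hA.1 x (star (N i)), aux_herm hC.1 x (star (N i)), star_star]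
    have hp : 0 ≤ N i ⬝ᵥ A *ᵥ star (N i) := by simpa using hA.dotProduct_mulVec_nonneg (star (N i))
    have hq : 0 ≤ N i ⬝ᵥ C *ᵥ star (N i) := by simpa using hC.dotProduct_mulVec_nonneg (star (N i))
    have hs : 0 ≤ star x ⬝ᵥ A *ᵥ x := hA.dotProduct_mulVec_nonneg x
    have ht : 0 ≤ star x ⬝ᵥ C *ᵥ x := hC.dotProduct_mulVec_nonneg x
    have ha : ‖N i ⬝ᵥ A *ᵥ x‖ ^ 2 ≤ (N i ⬝ᵥ A *ᵥ star (N i)).re * (star x ⬝ᵥ A *ᵥ x).re := by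
      simpa using aux_cs hA (star (N i)) x
    have hc : ‖N i ⬝ᵥ C *ᵥ x‖ ^ 2 ≤ (N i ⬝ᵥ C *ᵥ star (N i)).re * (star x ⬝ᵥ C *ᵥ x).re := by
      simpa using aux_cs hC (star (N i)) x
    exact aux_term _ _ _ _ _ _ hp hq hs ht ha hc
end

section
/- Let ω(k) = 1 − cos(2πk). For all real k₁, k₂, k₃, k₄ with k₁ + k₂ − k₃ − k₄ ∈ ℤ, the energy conservation ω(k₁) + ω(k₂) − ω(k₃) − ω(k₄) = 0 holds if and only if k₁ − k₃ ∈ ℤ, or k₁ − k₄ ∈ ℤ, or k₃ + k₄ − 1/2 ∈ ℤ. -/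
/-- The nearest-neighbor dispersion relation of the Hubbard chain. -/
noncomputable def ω (k : ℝ) : ℝ := 1 - Real.cos (2 * Real.pi * k)

theorem stmt_2 (k₁ k₂ k₃ k₄ : ℝ) (hmom : ∃ m : ℤ, k₁ + k₂ - k₃ - k₄ = m) :
    ω k₁ + ω k₂ - ω k₃ - ω k₄ = 0 ↔
      (∃ m : ℤ, k₁ - k₃ = m) ∨ (∃ m : ℤ, k₁ - k₄ = m) ∨
        (∃ m : ℤ, k₃ + k₄ - 1/2 = m) := by
  obtain ⟨m, hm⟩ := hmom
  have hπ : Real.pi ≠ 0 := Real.pi_ne_zero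
  constructor
  · intro h
    have key : Real.cos (2*Real.pi*k₁) + Real.cos (2*Real.pi*k₂)
        = Real.cos (2*Real.pi*k₃) + Real.cos (2*Real.pi*k₄) := by
      unfold ω at h; linarith
    rw [Real.cos_add_cos, Real.cos_add_cos] at key
    have hsum : (2*Real.pi*k₁ + 2*Real.pi*k₂)/2
        = (2*Real.pi*k₃ + 2*Real.pi*k₄)/2 + (m : ℝ) * Real.pi := by
      linear_combination Real.pi * hm
    rw [hsum, Real.cos_add_int_mul_pi] at key
    have key2 : Real.cos ((2*Real.pi*k₃ + 2*Real.pi*k₄)/2) *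
        ((-1:ℝ)^m * Real.cos ((2*Real.pi*k₁ - 2*Real.pi*k₂)/2)
          - Real.cos ((2*Real.pi*k₃ - 2*Real.pi*k₄)/2)) = 0 := by
      linear_combination key / 2
    rcases mul_eq_zero.mp key2 with h0 | h1
    · right; right
      obtain ⟨n, hn⟩ := Real.cos_eq_zero_iff.mp h0
      refine ⟨n, ?_⟩
      have h2 : Real.pi * (k₃ + k₄ - 1/2 - n) = 0 := by linear_combination hn
      rcases mul_eq_zero.mp h2 with h3 | h3
      · exact absurd h3 hπ
      · linarith
    · have h1' : Real.cos ((2*Real.pi*k₁ - 2*Real.pi*k₂)/2 + (m : ℝ) * Real.pi)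
          = Real.cos ((2*Real.pi*k₃ - 2*Real.pi*k₄)/2) := by
        rw [Real.cos_add_int_mul_pi]; linarith
      obtain ⟨n, hn | hn⟩ := Real.cos_eq_cos_iff.mp h1'
      · left
        refine ⟨-n, ?_⟩
        have h2 : Real.pi * (k₁ - k₃ - (-n : ℤ)) = 0 := by
          push_cast
          linear_combination (Real.pi * hm - hn) / 2
        rcases mul_eq_zero.mp h2 with h3 | h3
        · exact absurd h3 hπ
        · linarith
      · right; left
        refine ⟨n, ?_⟩
        have h2 : Real.pi * (k₁ - k₄ - (n : ℤ)) = 0 := by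
          linear_combination (Real.pi * hm + hn) / 2
        rcases mul_eq_zero.mp h2 with h3 | h3
        · exact absurd h3 hπ
        · linarith
  · intro h
    unfold ω
    rcases h with ⟨n, hn⟩ | ⟨n, hn⟩ | ⟨n, hn⟩
    · have e1 : Real.cos (2*Real.pi*k₁) = Real.cos (2*Real.pi*k₃) := by
        have : 2*Real.pi*k₁ = 2*Real.pi*k₃ + (n : ℝ) * (2*Real.pi) := by
          linear_combination 2 * Real.pi * hn
        rw [this, Real.cos_add_int_mul_two_pi]
      have e2 : Real.cos (2*Real.pi*k₂) = Real.cos (2*Real.pi*k₄) := by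
        have : 2*Real.pi*k₂ = 2*Real.pi*k₄ + ((m - n : ℤ) : ℝ) * (2*Real.pi) := by
          push_cast
          linear_combination 2 * Real.pi * hm - 2 * Real.pi * hn
        rw [this, Real.cos_add_int_mul_two_pi]
      linarith
    · have e1 : Real.cos (2*Real.pi*k₁) = Real.cos (2*Real.pi*k₄) := by
        have : 2*Real.pi*k₁ = 2*Real.pi*k₄ + (n : ℝ) * (2*Real.pi) := by
          linear_combination 2 * Real.pi * hn
        rw [this, Real.cos_add_int_mul_two_pi]
      have e2 : Real.cos (2*Real.pi*k₂) = Real.cos (2*Real.pi*k₃) := by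
        have : 2*Real.pi*k₂ = 2*Real.pi*k₃ + ((m - n : ℤ) : ℝ) * (2*Real.pi) := by
          push_cast
          linear_combination 2 * Real.pi * hm - 2 * Real.pi * hn
        rw [this, Real.cos_add_int_mul_two_pi]
      linarith
    · have e1 : Real.cos (2*Real.pi*k₃) + Real.cos (2*Real.pi*k₄) = 0 := by
        rw [Real.cos_add_cos]
        have hz : Real.cos ((2*Real.pi*k₃ + 2*Real.pi*k₄)/2) = 0 := by
          apply Real.cos_eq_zero_iff.mpr
          exact ⟨n, by linear_combination Real.pi * hn⟩
        rw [hz]; ring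
      have e2 : Real.cos (2*Real.pi*k₁) + Real.cos (2*Real.pi*k₂) = 0 := by
        rw [Real.cos_add_cos]
        have hz : Real.cos ((2*Real.pi*k₁ + 2*Real.pi*k₂)/2) = 0 := by
          apply Real.cos_eq_zero_iff.mpr
          exact ⟨n + m, by push_cast; linear_combination Real.pi * hn + Real.pi * hm⟩
        rw [hz]; ring
      linarith
end

section
/- Let ω(k) = 1 − cos(2πk) and let g : ℝ → ℝ be 1-periodic and satisfy g(k) = −g(1/2 − k) for all real k. Then for all real k₁, k₂, k₃, k₄ with k₁ + k₂ − k₃ − k₄ ∈ ℤ and ω(k₁) + ω(k₂) = ω(k₃) + ω(k₄), one has g(k₁) + g(k₂) − g(k₃) − g(k₄) = 0. (This is the pointwise collision invariance underlying the infinitely many conservation laws of the nearest-neighbor Hubbard kinetic equation.) -/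
theorem stmt_3 (g : ℝ → ℝ) (hper : Function.Periodic g 1)
    (hsym : ∀ k : ℝ, g k = -g (1/2 - k))
    (k₁ k₂ k₃ k₄ : ℝ) (hmom : ∃ m : ℤ, k₁ + k₂ - k₃ - k₄ = m)
    (hen : ω k₁ + ω k₂ = ω k₃ + ω k₄) :
    g k₁ + g k₂ - g k₃ - g k₄ = 0 := by
  obtain ⟨m, hm⟩ := hmom
  have gadd : ∀ (x : ℝ) (n : ℤ), g (x + n) = g x := by
    intro x n
    simpa using (hper.int_mul n) x
  set π := Real.pi with hπdef
  have hπ : π ≠ 0 := Real.pi_ne_zero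
  simp only [ω] at hen
  have hc : Real.cos (2*π*k₁) + Real.cos (2*π*k₂)
      = Real.cos (2*π*k₃) + Real.cos (2*π*k₄) := by linarith
  have e12 : Real.cos (2*π*k₁) + Real.cos (2*π*k₂)
      = 2 * Real.cos (π*(k₁+k₂)) * Real.cos (π*(k₁-k₂)) := by
    rw [show 2*π*k₁ = π*(k₁+k₂) + π*(k₁-k₂) by ring,
        show 2*π*k₂ = π*(k₁+k₂) - π*(k₁-k₂) by ring,
        Real.cos_add, Real.cos_sub]
    ring
  have e34 : Real.cos (2*π*k₃) + Real.cos (2*π*k₄)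
      = 2 * Real.cos (π*(k₃+k₄)) * Real.cos (π*(k₃-k₄)) := by
    rw [show 2*π*k₃ = π*(k₃+k₄) + π*(k₃-k₄) by ring,
        show 2*π*k₄ = π*(k₃+k₄) - π*(k₃-k₄) by ring,
        Real.cos_add, Real.cos_sub]
    ring
  have hA : Real.cos (π*(k₁+k₂)) = (-1)^m * Real.cos (π*(k₃+k₄)) := by
    rw [show π*(k₁+k₂) = (m:ℝ)*π - (-(π*(k₃+k₄))) by linear_combination π * hm,
        Real.cos_int_mul_pi_sub, Real.cos_neg]
  have hc2 : 2 * Real.cos (π*(k₁+k₂)) * Real.cos (π*(k₁-k₂))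
      = 2 * Real.cos (π*(k₃+k₄)) * Real.cos (π*(k₃-k₄)) := by
    rw [← e12, ← e34]; exact hc
  have hkey : Real.cos (π*(k₃+k₄)) *
      ((-1)^m * Real.cos (π*(k₁-k₂)) - Real.cos (π*(k₃-k₄))) = 0 := by
    linear_combination hc2/2 - Real.cos (π*(k₁-k₂)) * hA
  rcases mul_eq_zero.mp hkey with h0 | hd
  · -- cos(π(k₃+k₄)) = 0 : both pair sums ≡ 1/2 mod 1
    obtain ⟨n, hn⟩ := Real.cos_eq_zero_iff.mp h0
    have hk34 : k₃ + k₄ = n + 1/2 := by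
      have : π * (k₃ + k₄) = π * ((n:ℝ) + 1/2) := by linear_combination hn
      exact mul_left_cancel₀ hπ this
    have hk12 : k₁ + k₂ = (n + m : ℤ) + 1/2 := by push_cast; linarith
    have h4 : g k₄ = - g k₃ := by
      rw [show k₄ = (1/2 - k₃) + (n:ℤ) by linarith, gadd]
      linarith [hsym k₃]
    have h2 : g k₂ = - g k₁ := by
      rw [show k₂ = (1/2 - k₁) + ((n+m : ℤ):ℝ) by push_cast; linarith, gadd]
      linarith [hsym k₁]
    linarith
  · -- difference cosines agree up to (-1)^m
    have hd' : Real.cos ((m:ℝ)*π - π*(k₁-k₂)) = Real.cos (π*(k₃-k₄)) := by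
      rw [Real.cos_int_mul_pi_sub]; linarith
    obtain ⟨n, hn | hn⟩ := Real.cos_eq_cos_iff.mp hd'
    · -- π(k₃-k₄) = 2nπ + (mπ - π(k₁-k₂))
      have hdiff : k₃ - k₄ = 2*(n:ℝ) + m - (k₁ - k₂) := by
        have : π * (k₃ - k₄) = π * (2*(n:ℝ) + m - (k₁ - k₂)) := by
          linear_combination hn
        exact mul_left_cancel₀ hπ this
      have h3 : g k₃ = g k₂ := by
        rw [show k₃ = k₂ + (n:ℤ) by linarith, gadd]
      have h4 : g k₄ = g k₁ := by
        rw [show k₄ = k₁ + ((-n-m : ℤ):ℝ) by push_cast; linarith, gadd]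
      linarith
    · -- π(k₃-k₄) = 2nπ - (mπ - π(k₁-k₂))
      have hdiff : k₃ - k₄ = 2*(n:ℝ) - m + (k₁ - k₂) := by
        have : π * (k₃ - k₄) = π * (2*(n:ℝ) - m + (k₁ - k₂)) := by
          linear_combination hn
        exact mul_left_cancel₀ hπ this
      have h3 : g k₃ = g k₁ := by
        rw [show k₃ = k₁ + ((n-m : ℤ):ℝ) by push_cast; linarith, gadd]
      have h4 : g k₄ = g k₂ := by
        rw [show k₄ = k₂ + ((-n : ℤ):ℝ) by push_cast; linarith, gadd]
      linarith
end

section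
/- The function g : ℝ² → ℝ defined by g(a,u) = log(cosh(a) + cosh(u)) is strictly convex on ℝ². -/
open Real

/-- log ∘ cosh is strictly convex on ℝ. -/
lemma logcosh_strictConvexOn :
    StrictConvexOn ℝ (Set.univ : Set ℝ) (fun x : ℝ => Real.log (Real.cosh x)) := by
  have hd : ∀ x : ℝ, HasDerivAt (fun x : ℝ => Real.log (Real.cosh x))
      (Real.sinh x / Real.cosh x) x := fun x =>
    (Real.hasDerivAt_cosh x).log (Real.cosh_pos x).ne'
  have hd2 : ∀ x : ℝ, HasDerivAt (fun x : ℝ => Real.sinh x / Real.cosh x)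
      (1 / Real.cosh x ^ 2) x := by
    intro x
    have h := (Real.hasDerivAt_sinh x).div (Real.hasDerivAt_cosh x) (Real.cosh_pos x).ne'
    have e : (1 / Real.cosh x ^ 2)
        = (Real.cosh x * Real.cosh x - Real.sinh x * Real.sinh x) / Real.cosh x ^ 2 := by
      congr 1
      nlinarith [Real.cosh_sq_sub_sinh_sq x]
    rw [e]
    exact h
  have hderiv : deriv (fun x : ℝ => Real.log (Real.cosh x))
      = fun x : ℝ => Real.sinh x / Real.cosh x := funext fun x => (hd x).deriv
  apply StrictMonoOn.strictConvexOn_of_deriv convex_univ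
  · exact (Real.continuous_cosh.log fun x => (Real.cosh_pos x).ne').continuousOn
  · rw [interior_univ, hderiv]
    exact fun x _ y _ hxy =>
      StrictMono.lt_iff_lt (f := fun x : ℝ => Real.sinh x / Real.cosh x)
        (strictMono_of_hasDerivAt_pos (f := fun x : ℝ => Real.sinh x / Real.cosh x)
          hd2 (fun x => by positivity)) |>.mpr hxy

/-- Two-term Hölder inequality. -/
lemma holder2 {a b A1 A2 B1 B2 : ℝ} (ha : 0 < a) (hb : 0 < b) (hab : a + b = 1)
    (hA1 : 0 < A1) (hA2 : 0 < A2) (hB1 : 0 < B1) (hB2 : 0 < B2) :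
    A1 ^ a * B1 ^ b + A2 ^ a * B2 ^ b ≤ (A1 + A2) ^ a * (B1 + B2) ^ b := by
  set S := A1 + A2 with hS
  set T := B1 + B2 with hT
  have hSpos : 0 < S := by positivity
  have hTpos : 0 < T := by positivity
  have hST : 0 < S ^ a * T ^ b := by positivity
  have g1 := Real.geom_mean_le_arith_mean2_weighted ha.le hb.le
    (div_nonneg hA1.le hSpos.le) (div_nonneg hB1.le hTpos.le) hab
  have g2 := Real.geom_mean_le_arith_mean2_weighted ha.le hb.le
    (div_nonneg hA2.le hSpos.le) (div_nonneg hB2.le hTpos.le) hab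
  have e1 : (A1 / S) ^ a * (B1 / T) ^ b = A1 ^ a * B1 ^ b / (S ^ a * T ^ b) := by
    rw [Real.div_rpow hA1.le hSpos.le, Real.div_rpow hB1.le hTpos.le]; ring
  have e2 : (A2 / S) ^ a * (B2 / T) ^ b = A2 ^ a * B2 ^ b / (S ^ a * T ^ b) := by
    rw [Real.div_rpow hA2.le hSpos.le, Real.div_rpow hB2.le hTpos.le]; ring
  rw [e1] at g1
  rw [e2] at g2
  have hsum : a * (A1 / S) + b * (B1 / T) + (a * (A2 / S) + b * (B2 / T)) = 1 := by
    have e : a * (A1 / S) + b * (B1 / T) + (a * (A2 / S) + b * (B2 / T))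
        = a * ((A1 + A2) / S) + b * ((B1 + B2) / T) := by ring
    rw [e, ← hS, ← hT, div_self hSpos.ne', div_self hTpos.ne', mul_one, mul_one, hab]
  have := add_le_add g1 g2
  rw [← add_div] at this
  calc A1 ^ a * B1 ^ b + A2 ^ a * B2 ^ b
      = (A1 ^ a * B1 ^ b + A2 ^ a * B2 ^ b) / (S ^ a * T ^ b) * (S ^ a * T ^ b) := by
        field_simp
    _ ≤ 1 * (S ^ a * T ^ b) := by
        apply mul_le_mul_of_nonneg_right _ hST.le
        rw [← hsum]
        exact this
    _ = S ^ a * T ^ b := one_mul _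

/-- Key coordinate inequality, non-strict. -/
lemma cosh_interp_le {a b p q : ℝ} (ha : 0 < a) (hb : 0 < b) (hab : a + b = 1) :
    Real.cosh (a * p + b * q) ≤ Real.cosh p ^ a * Real.cosh q ^ b := by
  have h := logcosh_strictConvexOn.convexOn.2 (Set.mem_univ p) (Set.mem_univ q)
    ha.le hb.le hab
  simp only [smul_eq_mul] at h
  have key : Real.cosh p ^ a * Real.cosh q ^ b
      = Real.exp (a * Real.log (Real.cosh p) + b * Real.log (Real.cosh q)) := by
    rw [Real.rpow_def_of_pos (Real.cosh_pos p), Real.rpow_def_of_pos (Real.cosh_pos q),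
      ← Real.exp_add, mul_comm (Real.log (Real.cosh p)), mul_comm (Real.log (Real.cosh q))]
  rw [key, ← Real.exp_log (Real.cosh_pos (a * p + b * q))]
  exact Real.exp_le_exp.mpr h

/-- Key coordinate inequality, strict. -/
lemma cosh_interp_lt {a b p q : ℝ} (ha : 0 < a) (hb : 0 < b) (hab : a + b = 1)
    (hpq : p ≠ q) :
    Real.cosh (a * p + b * q) < Real.cosh p ^ a * Real.cosh q ^ b := by
  have h := logcosh_strictConvexOn.2 (Set.mem_univ p) (Set.mem_univ q) hpq ha hb hab
  simp only [smul_eq_mul] at h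
  have key : Real.cosh p ^ a * Real.cosh q ^ b
      = Real.exp (a * Real.log (Real.cosh p) + b * Real.log (Real.cosh q)) := by
    rw [Real.rpow_def_of_pos (Real.cosh_pos p), Real.rpow_def_of_pos (Real.cosh_pos q),
      ← Real.exp_add, mul_comm (Real.log (Real.cosh p)), mul_comm (Real.log (Real.cosh q))]
  rw [key, ← Real.exp_log (Real.cosh_pos (a * p + b * q))]
  exact Real.exp_lt_exp.mpr h

theorem stmt_9 :
    StrictConvexOn ℝ (Set.univ : Set (ℝ × ℝ))
      (fun p : ℝ × ℝ => Real.log (Real.cosh p.1 + Real.cosh p.2)) := by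
  refine ⟨convex_univ, fun x _ y _ hxy a b ha hb hab => ?_⟩
  have hA1 := Real.cosh_pos x.1
  have hA2 := Real.cosh_pos x.2
  have hB1 := Real.cosh_pos y.1
  have hB2 := Real.cosh_pos y.2
  have hm1 : (a • x + b • y).1 = a * x.1 + b * y.1 := rfl
  have hm2 : (a • x + b • y).2 = a * x.2 + b * y.2 := rfl
  have hstep2 := holder2 ha hb hab hA1 hA2 hB1 hB2
  have hstrict : Real.cosh (a * x.1 + b * y.1) + Real.cosh (a * x.2 + b * y.2)
      < Real.cosh x.1 ^ a * Real.cosh y.1 ^ b + Real.cosh x.2 ^ a * Real.cosh y.2 ^ b := by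
    by_cases h1 : x.1 = y.1
    · have h2 : x.2 ≠ y.2 := fun h2 => hxy (Prod.ext h1 h2)
      exact add_lt_add_of_le_of_lt (cosh_interp_le ha hb hab) (cosh_interp_lt ha hb hab h2)
    · exact add_lt_add_of_lt_of_le (cosh_interp_lt ha hb hab h1) (cosh_interp_le ha hb hab)
  have hlt : Real.cosh (a * x.1 + b * y.1) + Real.cosh (a * x.2 + b * y.2)
      < (Real.cosh x.1 + Real.cosh x.2) ^ a * (Real.cosh y.1 + Real.cosh y.2) ^ b :=
    lt_of_lt_of_le hstrict hstep2
  simp only [hm1, hm2, smul_eq_mul]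
  calc Real.log (Real.cosh (a * x.1 + b * y.1) + Real.cosh (a * x.2 + b * y.2))
      < Real.log ((Real.cosh x.1 + Real.cosh x.2) ^ a * (Real.cosh y.1 + Real.cosh y.2) ^ b) :=
        Real.log_lt_log (by positivity) hlt
    _ = a * Real.log (Real.cosh x.1 + Real.cosh x.2)
        + b * Real.log (Real.cosh y.1 + Real.cosh y.2) := by
        rw [Real.log_mul (by positivity) (by positivity),
          Real.log_rpow (by positivity), Real.log_rpow (by positivity)]
end

section
/- Let f₁, f₂ : ℝ → ℝ be continuous, a₁↑, a₁↓, a₂↑, a₂↓ ∈ ℝ, and t ∈ (0,1). Define H(f, a↑, a↓) = ∫_{−1/4}^{1/4} [ log(cosh(a↑) + cosh(f(k))) + log(cosh(a↓) + cosh(f(k))) ] dk. Then H(t·f₁ + (1−t)·f₂, t·a₁↑ + (1−t)·a₂↑, t·a₁↓ + (1−t)·a₂↓) ≤ t·H(f₁, a₁↑, a₁↓) + (1−t)·H(f₂, a₂↑, a₂↓), with strict inequality unless f₁ = f₂ on [−1/4, 1/4], a₁↑ = a₂↑, and a₁↓ = a₂↓. (The generalized free energy H is strictly convex.) -/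
open Real Set intervalIntegral

lemma keyStrict (A X α β : ℝ) (hne : α ≠ 0 ∨ β ≠ 0) :
    StrictConvexOn ℝ Set.univ
      (fun s : ℝ => Real.log (Real.cosh (A + s * α) + Real.cosh (X + s * β))) := by
  set F : ℝ → ℝ := fun s => Real.cosh (A + s * α) + Real.cosh (X + s * β) with hF
  have hFpos : ∀ s, 0 < F s := fun s => add_pos (Real.cosh_pos _) (Real.cosh_pos _)
  have hF' : ∀ s, HasDerivAt F
      (Real.sinh (A + s * α) * α + Real.sinh (X + s * β) * β) s := by
    intro s
    have h1 : HasDerivAt (fun s : ℝ => A + s * α) α s := by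
      simpa using (hasDerivAt_mul_const α).const_add A
    have h2 : HasDerivAt (fun s : ℝ => X + s * β) β s := by
      simpa using (hasDerivAt_mul_const β).const_add X
    exact h1.cosh.add h2.cosh
  have hlog : ∀ s, HasDerivAt (fun s => Real.log (F s))
      ((Real.sinh (A + s * α) * α + Real.sinh (X + s * β) * β) / F s) s :=
    fun s => (hF' s).log (hFpos s).ne'
  set D1 : ℝ → ℝ :=
    fun s => (Real.sinh (A + s * α) * α + Real.sinh (X + s * β) * β) / F s with hD1
  have hd1 : deriv (fun s => Real.log (F s)) = D1 := funext fun s => (hlog s).deriv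
  have hnum : ∀ s, HasDerivAt
      (fun s => Real.sinh (A + s * α) * α + Real.sinh (X + s * β) * β)
      (Real.cosh (A + s * α) * α * α + Real.cosh (X + s * β) * β * β) s := by
    intro s
    have h1 : HasDerivAt (fun s : ℝ => A + s * α) α s := by
      simpa using (hasDerivAt_mul_const α).const_add A
    have h2 : HasDerivAt (fun s : ℝ => X + s * β) β s := by
      simpa using (hasDerivAt_mul_const β).const_add X
    exact (h1.sinh.mul_const α).add (h2.sinh.mul_const β)
  have hd2 : ∀ s, HasDerivAt D1
      (((Real.cosh (A + s * α) * α * α + Real.cosh (X + s * β) * β * β) * F s -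
        (Real.sinh (A + s * α) * α + Real.sinh (X + s * β) * β) *
          (Real.sinh (A + s * α) * α + Real.sinh (X + s * β) * β)) / F s ^ 2) s :=
    fun s => (hnum s).div (hF' s) (hFpos s).ne'
  apply strictConvexOn_of_deriv2_pos convex_univ
  · have : Continuous fun s => Real.log (F s) :=
      Continuous.log (by fun_prop) (fun s => (hFpos s).ne')
    exact this.continuousOn
  · intro s _
    have : deriv^[2] (fun s => Real.log (F s)) s = deriv D1 s := by
      simp [Function.iterate_succ, hd1]
    rw [this, (hd2 s).deriv]
    apply div_pos _ (pow_pos (hFpos s) 2)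
    set Ca := Real.cosh (A + s * α)
    set Sa := Real.sinh (A + s * α)
    set Cx := Real.cosh (X + s * β)
    set Sx := Real.sinh (X + s * β)
    have h1 : Ca ^ 2 = Sa ^ 2 + 1 := Real.cosh_sq _
    have h2 : Cx ^ 2 = Sx ^ 2 + 1 := Real.cosh_sq _
    have hCa : 1 ≤ Ca := Real.one_le_cosh _
    have hCx : 1 ≤ Cx := Real.one_le_cosh _
    have hCC : 0 < Ca * Cx := by nlinarith
    have hplus : 0 ≤ Ca * Cx + Sa * Sx := by nlinarith [sq_nonneg (Ca * Cx + Sa * Sx)]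
    have hminus : 0 ≤ Ca * Cx - Sa * Sx := by nlinarith [sq_nonneg (Ca * Cx - Sa * Sx)]
    have hαβ : 0 < α ^ 2 + β ^ 2 := by
      rcases hne with h | h <;> positivity
    show (0:ℝ) < (Ca * α * α + Cx * β * β) * F s - _
    simp only [hF]
    nlinarith [mul_nonneg (sq_nonneg (α - β)) hplus, mul_nonneg (sq_nonneg (α + β)) hminus]


noncomputable def Gfun (a x : ℝ) : ℝ := Real.log (Real.cosh a + Real.cosh x)

lemma Gfun_strict {a₁ x₁ a₂ x₂ t : ℝ} (ht : t ∈ Set.Ioo (0:ℝ) 1)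
    (hne : a₁ ≠ a₂ ∨ x₁ ≠ x₂) :
    Gfun (t * a₁ + (1 - t) * a₂) (t * x₁ + (1 - t) * x₂)
      < t * Gfun a₁ x₁ + (1 - t) * Gfun a₂ x₂ := by
  obtain ⟨ht0, ht1⟩ := ht
  have hk := keyStrict a₂ x₂ (a₁ - a₂) (x₁ - x₂)
    (by rcases hne with h | h; · exact Or.inl (sub_ne_zero.mpr h)
        · exact Or.inr (sub_ne_zero.mpr h))
  have h := hk.2 (Set.mem_univ (1:ℝ)) (Set.mem_univ (0:ℝ)) one_ne_zero ht0
    (show (0:ℝ) < 1 - t by linarith) (show t + (1 - t) = 1 by ring)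
  simp only [smul_eq_mul, mul_one, mul_zero, add_zero] at h
  have e1 : a₂ + t * (a₁ - a₂) = t * a₁ + (1 - t) * a₂ := by ring
  have e2 : x₂ + t * (x₁ - x₂) = t * x₁ + (1 - t) * x₂ := by ring
  have e3 : a₂ + 1 * (a₁ - a₂) = a₁ := by ring
  have e4 : x₂ + 1 * (x₁ - x₂) = x₁ := by ring
  have e5 : a₂ + 0 * (a₁ - a₂) = a₂ := by ring
  have e6 : x₂ + 0 * (x₁ - x₂) = x₂ := by ring
  rw [e1, e2, e3, e4, e5, e6] at h
  simpa [Gfun] using h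

lemma Gfun_le {a₁ x₁ a₂ x₂ t : ℝ} (ht : t ∈ Set.Ioo (0:ℝ) 1) :
    Gfun (t * a₁ + (1 - t) * a₂) (t * x₁ + (1 - t) * x₂)
      ≤ t * Gfun a₁ x₁ + (1 - t) * Gfun a₂ x₂ := by
  by_cases h : a₁ = a₂ ∧ x₁ = x₂
  · obtain ⟨rfl, rfl⟩ := h
    have e1 : t * a₁ + (1 - t) * a₁ = a₁ := by ring
    have e2 : t * x₁ + (1 - t) * x₁ = x₁ := by ring
    rw [e1, e2]
    have : t * Gfun a₁ x₁ + (1 - t) * Gfun a₁ x₁ = Gfun a₁ x₁ := by ring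
    linarith
  · exact (Gfun_strict ht (by tauto)).le


lemma integral_lt_of_lt_at {φ ψ : ℝ → ℝ} {a b c : ℝ} (hab : a < b)
    (hφ : Continuous φ) (hψ : Continuous ψ) (hle : ∀ x ∈ Set.Icc a b, φ x ≤ ψ x)
    (hc : c ∈ Set.Icc a b) (hlt : φ c < ψ c) :
    (∫ x in a..b, φ x) < ∫ x in a..b, ψ x := by
  set d : ℝ → ℝ := fun x => ψ x - φ x with hd
  have hdc : Continuous d := hψ.sub hφ
  have hdcpos : (0:ℝ) < d c := sub_pos.mpr hlt
  have hopen : IsOpen {x : ℝ | 0 < d x} := isOpen_lt continuous_const hdc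
  obtain ⟨ε, hε, hball⟩ := Metric.isOpen_iff.mp hopen c hdcpos
  obtain ⟨hac, hcb⟩ := hc
  set u := max a (c - ε/2) with hu
  set v := min b (c + ε/2) with hv
  have hau : a ≤ u := le_max_left _ _
  have hvb : v ≤ b := min_le_left _ _
  have huv : u < v := max_lt (lt_min (by linarith) (by linarith))
    (lt_min (by linarith) (by linarith))
  have hpos : ∀ x ∈ Set.Ioo u v, 0 < d x := by
    intro x hx
    have h1 : c - ε/2 ≤ u := le_max_right _ _
    have h2 : v ≤ c + ε/2 := min_le_right _ _
    have : x ∈ Metric.ball c ε := by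
      rw [Metric.mem_ball, Real.dist_eq, abs_sub_lt_iff]
      obtain ⟨hx1, hx2⟩ := hx
      constructor <;> linarith
    exact hball this
  have h1 : 0 < ∫ x in u..v, d x :=
    intervalIntegral_pos_of_pos_on (hdc.intervalIntegrable _ _) hpos huv
  have h2 : (∫ x in u..v, d x) ≤ ∫ x in a..b, d x := by
    apply intervalIntegral.integral_mono_interval hau huv.le hvb ?_
      (hdc.intervalIntegrable _ _)
    filter_upwards [MeasureTheory.ae_restrict_mem measurableSet_Ioc] with x hx
    exact sub_nonneg.mpr (hle x (Set.Ioc_subset_Icc_self hx))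
  have h3 : (∫ x in a..b, d x) = (∫ x in a..b, ψ x) - ∫ x in a..b, φ x :=
    intervalIntegral.integral_sub (hψ.intervalIntegrable _ _) (hφ.intervalIntegrable _ _)
  linarith

/-- The generalized free energy of the nearest-neighbor Hubbard Boltzmann equation. -/
noncomputable def H (f : ℝ → ℝ) (aup adown : ℝ) : ℝ :=
  ∫ k in (-(1/4 : ℝ))..(1/4 : ℝ),
    (Real.log (Real.cosh aup + Real.cosh (f k)) + Real.log (Real.cosh adown + Real.cosh (f k)))

theorem stmt_10 (f₁ f₂ : ℝ → ℝ) (hf₁ : Continuous f₁) (hf₂ : Continuous f₂)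
    (a₁up a₁down a₂up a₂down : ℝ) (t : ℝ) (ht : t ∈ Set.Ioo (0:ℝ) 1) :
    H (fun k => t * f₁ k + (1 - t) * f₂ k) (t * a₁up + (1 - t) * a₂up)
        (t * a₁down + (1 - t) * a₂down)
      ≤ t * H f₁ a₁up a₁down + (1 - t) * H f₂ a₂up a₂down ∧
    (¬((∀ k ∈ Set.Icc (-(1/4 : ℝ)) (1/4 : ℝ), f₁ k = f₂ k) ∧ a₁up = a₂up ∧ a₁down = a₂down) →
      H (fun k => t * f₁ k + (1 - t) * f₂ k) (t * a₁up + (1 - t) * a₂up)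
          (t * a₁down + (1 - t) * a₂down)
        < t * H f₁ a₁up a₁down + (1 - t) * H f₂ a₂up a₂down) := by
  have contG : ∀ (a : ℝ) (f : ℝ → ℝ), Continuous f → Continuous fun k => Gfun a (f k) := by
    intro a f hf
    exact Continuous.log (by fun_prop)
      (fun k => (add_pos (Real.cosh_pos _) (Real.cosh_pos _)).ne')
  set g₁ : ℝ → ℝ := fun k => Gfun a₁up (f₁ k) + Gfun a₁down (f₁ k) with hg₁
  set g₂ : ℝ → ℝ := fun k => Gfun a₂up (f₂ k) + Gfun a₂down (f₂ k) with hg₂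
  set gc : ℝ → ℝ := fun k =>
    Gfun (t * a₁up + (1 - t) * a₂up) (t * f₁ k + (1 - t) * f₂ k) +
      Gfun (t * a₁down + (1 - t) * a₂down) (t * f₁ k + (1 - t) * f₂ k) with hgc
  have hfc : Continuous fun k => t * f₁ k + (1 - t) * f₂ k := by fun_prop
  have hc1 : Continuous g₁ := (contG _ _ hf₁).add (contG _ _ hf₁)
  have hc2 : Continuous g₂ := (contG _ _ hf₂).add (contG _ _ hf₂)
  have hcc : Continuous gc := (contG _ _ hfc).add (contG _ _ hfc)
  set ψ : ℝ → ℝ := fun k => t * g₁ k + (1 - t) * g₂ k with hψ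
  have hcψ : Continuous ψ := (continuous_const.mul hc1).add (continuous_const.mul hc2)
  have hle : ∀ k, gc k ≤ ψ k := by
    intro k
    have h1 := Gfun_le (a₁ := a₁up) (x₁ := f₁ k) (a₂ := a₂up) (x₂ := f₂ k) ht
    have h2 := Gfun_le (a₁ := a₁down) (x₁ := f₁ k) (a₂ := a₂down) (x₂ := f₂ k) ht
    simp only [hgc, hψ, hg₁, hg₂]
    ring_nf
    ring_nf at h1 h2
    linarith
  have hHc : H (fun k => t * f₁ k + (1 - t) * f₂ k) (t * a₁up + (1 - t) * a₂up)
      (t * a₁down + (1 - t) * a₂down) = ∫ k in (-(1/4:ℝ))..(1/4:ℝ), gc k := rfl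
  have hH1 : H f₁ a₁up a₁down = ∫ k in (-(1/4:ℝ))..(1/4:ℝ), g₁ k := rfl
  have hH2 : H f₂ a₂up a₂down = ∫ k in (-(1/4:ℝ))..(1/4:ℝ), g₂ k := rfl
  have hψint : (∫ k in (-(1/4:ℝ))..(1/4:ℝ), ψ k)
      = t * (∫ k in (-(1/4:ℝ))..(1/4:ℝ), g₁ k) + (1 - t) * ∫ k in (-(1/4:ℝ))..(1/4:ℝ), g₂ k := by
    rw [hψ]
    rw [intervalIntegral.integral_add ((hc1.intervalIntegrable _ _).const_mul t)
      ((hc2.intervalIntegrable _ _).const_mul (1 - t)),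
      intervalIntegral.integral_const_mul, intervalIntegral.integral_const_mul]
  constructor
  · rw [hHc, hH1, hH2, ← hψint]
    exact intervalIntegral.integral_mono_on (by norm_num) (hcc.intervalIntegrable _ _)
      (hcψ.intervalIntegrable _ _) (fun x _ => hle x)
  · intro hne
    rw [hHc, hH1, hH2, ← hψint]
    have hex : ∃ c ∈ Set.Icc (-(1/4:ℝ)) (1/4:ℝ), gc c < ψ c := by
      by_cases hq : a₁up = a₂up
      · by_cases hr : a₁down = a₂down
        · have hp : ¬∀ k ∈ Set.Icc (-(1/4:ℝ)) (1/4:ℝ), f₁ k = f₂ k := by tauto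
          push_neg at hp
          obtain ⟨c, hcmem, hfne⟩ := hp
          refine ⟨c, hcmem, ?_⟩
          have h1 := Gfun_strict (a₁ := a₁up) (x₁ := f₁ c) (a₂ := a₂up) (x₂ := f₂ c) ht
            (Or.inr hfne)
          have h2 := Gfun_le (a₁ := a₁down) (x₁ := f₁ c) (a₂ := a₂down) (x₂ := f₂ c) ht
          simp only [hgc, hψ, hg₁, hg₂]
          ring_nf; ring_nf at h1 h2; linarith
        · refine ⟨0, by norm_num, ?_⟩
          have h1 := Gfun_le (a₁ := a₁up) (x₁ := f₁ 0) (a₂ := a₂up) (x₂ := f₂ 0) ht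
          have h2 := Gfun_strict (a₁ := a₁down) (x₁ := f₁ 0) (a₂ := a₂down) (x₂ := f₂ 0) ht
            (Or.inl hr)
          simp only [hgc, hψ, hg₁, hg₂]
          ring_nf; ring_nf at h1 h2; linarith
      · refine ⟨0, by norm_num, ?_⟩
        have h1 := Gfun_strict (a₁ := a₁up) (x₁ := f₁ 0) (a₂ := a₂up) (x₂ := f₂ 0) ht
          (Or.inl hq)
        have h2 := Gfun_le (a₁ := a₁down) (x₁ := f₁ 0) (a₂ := a₂down) (x₂ := f₂ 0) ht
        simp only [hgc, hψ, hg₁, hg₂]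
        ring_nf; ring_nf at h1 h2; linarith
    obtain ⟨c, hcmem, hstrict⟩ := hex
    exact integral_lt_of_lt_at (by norm_num) hcc hcψ (fun x _ => hle x) hcmem hstrict
end

section
/- Let K be a nonempty type and u, v : K → ℂ² be such that for every k ∈ K the pair (u(k), v(k)) is an orthonormal basis of ℂ². If ⟨u(k₁), v(k₂)⟩ · ⟨u(k₂), v(k₁)⟩ = 0 for all k₁, k₂ ∈ K, then ⟨u(k₁), v(k₂)⟩ = 0 for all k₁, k₂ ∈ K. -/
/-- The standard Hermitian inner product on ℂ², conjugate-linear in the first argument. -/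
noncomputable def inn (u v : Fin 2 → ℂ) : ℂ := ∑ i, star (u i) * v i

lemma inn_star (x y : Fin 2 → ℂ) : inn y x = star (inn x y) := by
  simp [inn, Fin.sum_univ_two, mul_comm]

lemma parseval (u v x : Fin 2 → ℂ) (hu : inn u u = 1) (hv : inn v v = 1)
    (huv : inn u v = 0) : inn x x = inn u x * inn x u + inn v x * inn x v := by
  have hvu : inn v u = 0 := by rw [inn_star, huv, star_zero]
  simp only [inn, Fin.sum_univ_two] at hu hv huv hvu ⊢
  have hA : star (v 0) * x 0 + star (v 1) * x 1 =
      (star (u 0) * star (v 1) - star (u 1) * star (v 0)) * (u 0 * x 1 - u 1 * x 0) := by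
    linear_combination (-(star (v 0) * x 0 + star (v 1) * x 1)) * hu +
      (star (u 0) * x 0 + star (u 1) * x 1) * hvu
  have hB : star (x 0) * v 0 + star (x 1) * v 1 =
      (star (u 0) * star (x 1) - star (u 1) * star (x 0)) * (u 0 * v 1 - u 1 * v 0) := by
    linear_combination (-(star (x 0) * v 0 + star (x 1) * v 1)) * hu +
      (star (x 0) * u 0 + star (x 1) * u 1) * huv
  have hC : star (x 0) * x 0 + star (x 1) * x 1 =
      (star (u 0) * x 0 + star (u 1) * x 1) * (star (x 0) * u 0 + star (x 1) * u 1) +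
      (star (u 0) * star (x 1) - star (u 1) * star (x 0)) * (u 0 * x 1 - u 1 * x 0) := by
    linear_combination (-(star (x 0) * x 0 + star (x 1) * x 1)) * hu
  have hD : (star (u 0) * star (v 1) - star (u 1) * star (v 0)) * (u 0 * v 1 - u 1 * v 0) = 1 := by
    linear_combination (star (v 0) * v 0 + star (v 1) * v 1) * hu + hv -
      (star (v 0) * u 0 + star (v 1) * u 1) * huv
  linear_combination hC - (star (x 0) * v 0 + star (x 1) * v 1) * hA -
    ((star (u 0) * star (v 1) - star (u 1) * star (v 0)) * (u 0 * x 1 - u 1 * x 0)) * hB -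
    ((star (u 0) * star (x 1) - star (u 1) * star (x 0)) * (u 0 * x 1 - u 1 * x 0)) * hD

theorem stmt_12 (K : Type*) [Nonempty K] (u v : K → Fin 2 → ℂ)
    (hu : ∀ k, inn (u k) (u k) = 1) (hv : ∀ k, inn (v k) (v k) = 1)
    (huv : ∀ k, inn (u k) (v k) = 0)
    (hprod : ∀ k₁ k₂, inn (u k₁) (v k₂) * inn (u k₂) (v k₁) = 0) :
    ∀ k₁ k₂, inn (u k₁) (v k₂) = 0 := by
  intro k₁ k₂
  rcases mul_eq_zero.mp (hprod k₁ k₂) with h | h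
  · exact h
  · -- inn (u k₂) (v k₁) = 0; show |inn (u k₁) (v k₂)|² = |inn (u k₂) (v k₁)|² = 0
    -- Parseval of (v k₂) in basis (u k₁, v k₁):
    have h1 : inn (v k₂) (v k₂) =
        inn (u k₁) (v k₂) * inn (v k₂) (u k₁) + inn (v k₁) (v k₂) * inn (v k₂) (v k₁) :=
      parseval _ _ _ (hu k₁) (hv k₁) (huv k₁)
    -- Parseval of (v k₁) in basis (u k₂, v k₂):
    have h2 : inn (v k₁) (v k₁) =
        inn (u k₂) (v k₁) * inn (v k₁) (u k₂) + inn (v k₂) (v k₁) * inn (v k₁) (v k₂) :=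
      parseval _ _ _ (hu k₂) (hv k₂) (huv k₂)
    rw [hv k₂] at h1
    rw [hv k₁, h, zero_mul, zero_add] at h2
    have key : inn (u k₁) (v k₂) * inn (v k₂) (u k₁) = 0 := by
      linear_combination h2 - h1
    rw [inn_star] at key
    have hz : inn (v k₂) (u k₁) = 0 := by
      have h0 : ((Complex.normSq (inn (v k₂) (u k₁)) : ℝ) : ℂ) = 0 := by
        rw [Complex.normSq_eq_conj_mul_self]
        exact key
      exact Complex.normSq_eq_zero.mp (by exact_mod_cast h0)
    rw [inn_star, hz, star_zero]
end

section
/- Zero entropy production characterizes generalized Fermi-Dirac states (Proposition A.1): Let ω(k) = 1 − cos(2πk). Let ε↑, ε↓ : ℝ → ℝ and e↑, e↓ : ℝ → ℂ² all be 1-periodic, with 0 < ε_σ(k) < 1 and (e↑(k), e↓(k)) an orthonormal basis of ℂ² for every k. Set Φ_σ(k) = log((1 − ε_σ(k)) / ε_σ(k)). Assume that for all real k₁, k₂, k₃, k₄ with k₁ + k₂ − k₃ − k₄ ∈ ℤ and ω(k₁) + ω(k₂) = ω(k₃) + ω(k₄), and all σ₁, σ₂, σ₃, σ₄ ∈ {↑,↓}: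 either Φ_{σ₁}(k₁) + Φ_{σ₂}(k₂) = Φ_{σ₃}(k₃) + Φ_{σ₄}(k₄), or ⟨e_{σ₁}(k₁), e_{σ₃}(k₃)⟩⟨e_{σ₂}(k₂), e_{σ₄}(k₄)⟩ = ⟨e_{σ₁}(k₁), e_{σ₄}(k₄)⟩⟨e_{σ₂}(k₂), e_{σ₃}(k₃)⟩. Then there exist an orthonormal basis (w↑, w↓) of ℂ², reals a↑, a↓, and a 1-periodic function f : ℝ → ℝ with f(k) = −f(1/2 − k) for all k, such that for every k the matrix W(k) = ε↑(k)·e↑(k)e↑(k)* + ε↓(k)·e↓(k)e↓(k)* equals Σ_{σ∈{↑,↓}} (e^{f(k) − a_σ} + 1)^{−1} · w_σ w_σ*. -/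
/-- The outer product u u* of a vector u ∈ ℂ² as a 2×2 matrix. -/
noncomputable def outer (u : Fin 2 → ℂ) : Matrix (Fin 2) (Fin 2) ℂ :=
  Matrix.of fun i j => u i * star (u j)

open Matrix

lemma inn_smul_left (c : ℂ) (x y : Fin 2 → ℂ) : inn (c • x) y = star c * inn x y := by
  simp only [inn, Fin.sum_univ_two, Pi.smul_apply, smul_eq_mul, star_mul']; ring

lemma inn_smul_right (c : ℂ) (x y : Fin 2 → ℂ) : inn x (c • y) = c * inn x y := by
  simp only [inn, Fin.sum_univ_two, Pi.smul_apply, smul_eq_mul]; ring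

lemma inn_conj (x y : Fin 2 → ℂ) : inn x y = star (inn y x) := by
  simp only [inn, Fin.sum_univ_two, star_add, star_mul', star_star]; ring

lemma inn_sub_right (x y z : Fin 2 → ℂ) : inn x (y - z) = inn x y - inn x z := by
  simp only [inn, Fin.sum_univ_two, Pi.sub_apply]; ring

lemma complete (u v : Fin 2 → ℂ) (huu : inn u u = 1) (hvv : inn v v = 1) (huv : inn u v = 0) :
    outer u + outer v = 1 := by
  have hvu : inn v u = 0 := by rw [inn_conj, huv, star_zero]
  simp only [inn, Fin.sum_univ_two, Complex.star_def] at huu hvv huv hvu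
  set M := (Matrix.of fun i j => if j = 0 then u i else v i : Matrix (Fin 2) (Fin 2) ℂ) with hM
  have h1 : Mᴴ * M = 1 := by
    ext i j
    fin_cases i <;> fin_cases j <;>
      simp [hM, Matrix.mul_apply, Matrix.conjTranspose_apply, Fin.sum_univ_two,
        Matrix.one_apply, Complex.star_def] <;>
      first
        | linear_combination huu
        | linear_combination hvv
        | linear_combination huv
        | linear_combination hvu
  have h2 : M * Mᴴ = 1 := mul_eq_one_comm.mp h1
  ext i j
  have h3 := congrFun (congrFun h2 i) j
  simp [hM, Matrix.mul_apply, Matrix.conjTranspose_apply, Fin.sum_univ_two] at h3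
  simp only [outer, Matrix.add_apply, Matrix.of_apply, Complex.star_def]
  rw [← h3]

lemma expand (u v x : Fin 2 → ℂ) (huu : inn u u = 1) (hvv : inn v v = 1) (huv : inn u v = 0) :
    x = inn u x • u + inn v x • v := by
  have h := complete u v huu hvv huv
  have h' : ∀ i j, u i * star (u j) + v i * star (v j) = if i = j then 1 else 0 := by
    intro i j
    have h2 := congrFun (congrFun h i) j
    simpa [outer, Matrix.add_apply, Matrix.of_apply, Matrix.one_apply] using h2
  have h00 : u 0 * (starRingEnd ℂ) (u 0) + v 0 * (starRingEnd ℂ) (v 0) = 1 := by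
    simpa [Complex.star_def] using h' 0 0
  have h01 : u 0 * (starRingEnd ℂ) (u 1) + v 0 * (starRingEnd ℂ) (v 1) = 0 := by
    simpa [Complex.star_def] using h' 0 1
  have h10 : u 1 * (starRingEnd ℂ) (u 0) + v 1 * (starRingEnd ℂ) (v 0) = 0 := by
    simpa [Complex.star_def] using h' 1 0
  have h11 : u 1 * (starRingEnd ℂ) (u 1) + v 1 * (starRingEnd ℂ) (v 1) = 1 := by
    simpa [Complex.star_def] using h' 1 1
  funext i
  fin_cases i <;>
    simp only [Fin.mk_zero, Fin.mk_one, Fin.isValue, Pi.add_apply, Pi.smul_apply,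
      smul_eq_mul, inn, Fin.sum_univ_two, Complex.star_def]
  · linear_combination (-1 : ℂ) * (x 0 * h00 + x 1 * h01)
  · linear_combination (-1 : ℂ) * (x 0 * h10 + x 1 * h11)

lemma unit_coeff {x u : Fin 2 → ℂ} {c : ℂ} (hx : inn x x = 1) (hu : inn u u = 1)
    (h : x = c • u) : star c * c = 1 := by
  rw [h, inn_smul_left, inn_smul_right, hu] at hx
  linear_combination hx

lemma smul_ne_zero_vec {x u : Fin 2 → ℂ} {c : ℂ} (hx : inn x x = 1) (hu : inn u u = 1)
    (h : x = c • u) : c ≠ 0 := by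
  intro h0
  have := unit_coeff hx hu h
  rw [h0] at this
  simp at this

lemma outer_smul {c : ℂ} {x : Fin 2 → ℂ} (hc : star c * c = 1) : outer (c • x) = outer x := by
  ext i j
  simp only [outer, Matrix.of_apply, Pi.smul_apply, smul_eq_mul, star_mul', Complex.star_def]
  simp only [Complex.star_def] at hc
  linear_combination (x i * (starRingEnd ℂ) (x j)) * hc

lemma par_perp {u v x : Fin 2 → ℂ} {c d : ℂ} (huv : inn u v = 0) (hxx : inn x x = 1)
    (h1 : x = c • u) (h2 : x = d • v) : False := by
  have e : inn (c • u) (d • v) = 1 := by rw [← h1, ← h2]; exact hxx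
  rw [inn_smul_left, inn_smul_right, huv] at e
  simp at e

lemma perp_align (u v x y : Fin 2 → ℂ)
    (huu : inn u u = 1) (hvv : inn v v = 1) (huv : inn u v = 0)
    (hxx : inn x x = 1) (hyy : inn y y = 1) (hxy : inn x y = 0)
    (h : inn u x = 0) :
    (∃ c : ℂ, x = c • v) ∧ (∃ d : ℂ, y = d • u) := by
  have hx := expand u v x huu hvv huv
  rw [h, zero_smul, zero_add] at hx
  refine ⟨⟨inn v x, hx⟩, ?_⟩
  have hvx : inn v x ≠ 0 := fun h0 => by
    rw [h0, zero_smul] at hx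
    rw [hx] at hxx
    simp [inn] at hxx
  have hvy : inn v y = 0 := by
    rw [hx, inn_smul_left] at hxy
    rcases mul_eq_zero.mp hxy with h' | h'
    · exact absurd (by simpa using h') hvx
    · exact h'
  have hy := expand u v y huu hvv huv
  rw [hvy, zero_smul, add_zero] at hy
  exact ⟨inn u y, hy⟩

lemma nonzero_inner (u v x : Fin 2 → ℂ)
    (huu : inn u u = 1) (hvv : inn v v = 1) (huv : inn u v = 0)
    (hxx : inn x x = 1) : inn u x ≠ 0 ∨ inn v x ≠ 0 := by
  by_contra hc
  push_neg at hc
  have h := expand u v x huu hvv huv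
  rw [hc.1, hc.2, zero_smul, zero_smul, add_zero] at h
  rw [h] at hxx
  simp [inn] at hxx

lemma exists_badspin (b₁ b₂ b₃ b₄ : Bool → Fin 2 → ℂ)
    (n₁ : ∀ σ, inn (b₁ σ) (b₁ σ) = 1) (o₁ : inn (b₁ true) (b₁ false) = 0)
    (n₂ : ∀ σ, inn (b₂ σ) (b₂ σ) = 1) (o₂ : inn (b₂ true) (b₂ false) = 0)
    (n₃ : ∀ σ, inn (b₃ σ) (b₃ σ) = 1) (o₃ : inn (b₃ true) (b₃ false) = 0)
    (n₄ : ∀ σ, inn (b₄ σ) (b₄ σ) = 1) (o₄ : inn (b₄ true) (b₄ false) = 0) :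
    ∃ σ₁ σ₂ σ₃ σ₄ : Bool,
      inn (b₁ σ₁) (b₃ σ₃) * inn (b₂ σ₂) (b₄ σ₄)
        ≠ inn (b₁ σ₁) (b₄ σ₄) * inn (b₂ σ₂) (b₃ σ₃) := by
  by_contra h
  push_neg at h
  have hv : ∀ σ₂ σ₃ σ₄, inn (b₂ σ₂) (b₄ σ₄) • b₃ σ₃ - inn (b₂ σ₂) (b₃ σ₃) • b₄ σ₄ = 0 := by
    intro σ₂ σ₃ σ₄
    have hzero : ∀ σ₁, inn (b₁ σ₁)
        (inn (b₂ σ₂) (b₄ σ₄) • b₃ σ₃ - inn (b₂ σ₂) (b₃ σ₃) • b₄ σ₄) = 0 := by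
      intro σ₁
      rw [inn_sub_right, inn_smul_right, inn_smul_right]
      linear_combination h σ₁ σ₂ σ₃ σ₄
    have hexp := expand (b₁ true) (b₁ false)
      (inn (b₂ σ₂) (b₄ σ₄) • b₃ σ₃ - inn (b₂ σ₂) (b₃ σ₃) • b₄ σ₄) (n₁ true) (n₁ false) o₁
    rw [hzero true, hzero false, zero_smul, zero_smul, add_zero] at hexp
    exact hexp.symm ▸ hexp.symm
  rcases nonzero_inner (b₂ true) (b₂ false) (b₃ true) (n₂ true) (n₂ false) o₂ (n₃ true)
    with hτ | hτ
  case' inl => set τ := true with hτdef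
  case' inr => set τ := false with hτdef
  all_goals {
    have key : ∀ σ₄, inn (b₂ τ) (b₃ true) • b₄ σ₄ = inn (b₂ τ) (b₄ σ₄) • b₃ true := by
      intro σ₄
      have := hv τ true σ₄
      rw [sub_eq_zero] at this
      exact this.symm
    -- b₄ true and b₄ false both parallel to b₃ true; contradiction
    have e1 : inn (inn (b₂ τ) (b₃ true) • b₄ true) (inn (b₂ τ) (b₃ true) • b₄ false) = 0 := by
      rw [inn_smul_left, inn_smul_right, o₄]; ring
    rw [key true, key false, inn_smul_left, inn_smul_right, n₃ true, mul_one] at e1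
    have e2 : inn (inn (b₂ τ) (b₃ true) • b₄ true) (inn (b₂ τ) (b₃ true) • b₄ true)
        = star (inn (b₂ τ) (b₃ true)) * inn (b₂ τ) (b₃ true) := by
      rw [inn_smul_left, inn_smul_right, n₄ true]; ring
    rw [key true, inn_smul_left, inn_smul_right, n₃ true, mul_one] at e2
    -- e1 : star c1 * c2 = 0, e2 : star c1 * c1 = star c * c  with c ≠ 0
    have hc : star (inn (b₂ τ) (b₃ true)) * inn (b₂ τ) (b₃ true) ≠ 0 :=
      mul_ne_zero (star_ne_zero.mpr hτ) hτ
    have h1 : inn (b₂ τ) (b₄ true) ≠ 0 := by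
      intro h0
      rw [h0] at e2
      simp only [star_zero, zero_mul] at e2
      exact hc e2.symm
    have h2 : inn (b₂ τ) (b₄ false) = 0 := by
      rcases mul_eq_zero.mp e1 with h' | h'
      · exact absurd (star_eq_zero.mp h') h1
      · exact h'
    -- then b₄ false = 0
    have := key false
    rw [h2, zero_smul] at this
    have hb4 : b₄ false = 0 := by
      rcases smul_eq_zero.mp this with h' | h'
      · exact absurd h' hτ
      · exact h'
    have := n₄ false
    rw [hb4] at this
    simp [inn] at this
  }

lemma phi_inj {a b : ℝ} (ha : a ∈ Set.Ioo (0:ℝ) 1) (hb : b ∈ Set.Ioo (0:ℝ) 1)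
    (h : Real.log ((1-a)/a) = Real.log ((1-b)/b)) : a = b := by
  have pa : 0 < (1-a)/a := div_pos (by linarith [ha.2]) ha.1
  have pb : 0 < (1-b)/b := div_pos (by linarith [hb.2]) hb.1
  have h1 : (1-a)/a = (1-b)/b := by
    rw [← Real.exp_log pa, ← Real.exp_log pb, h]
  have ha0 : a ≠ 0 := ne_of_gt ha.1
  have hb0 : b ≠ 0 := ne_of_gt hb.1
  field_simp at h1
  nlinarith [h1]

lemma eps_inv {a : ℝ} (ha : a ∈ Set.Ioo (0:ℝ) 1) :
    (Real.exp (Real.log ((1-a)/a)) + 1)⁻¹ = a := by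
  rw [Real.exp_log (div_pos (by linarith [ha.2]) ha.1)]
  have ha0 : a ≠ 0 := ne_of_gt ha.1
  rw [div_add' _ _ _ ha0, show 1 - a + 1 * a = 1 by ring, one_div, inv_inv]

lemma omega_pair (k : ℝ) : ω k + ω (1/2 - k) = 2 := by
  unfold ω
  rw [show 2 * Real.pi * (1/2 - k) = Real.pi - 2 * Real.pi * k by ring, Real.cos_pi_sub]
  ring

lemma cast_inv_eq {r s : ℝ} (h : (Real.exp r + 1)⁻¹ = s) :
    ((Real.exp r : ℂ) + 1)⁻¹ = (s : ℂ) := by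
  rw [← h]
  norm_cast

set_option maxHeartbeats 1600000 in
/-- Zero entropy production characterizes generalized Fermi-Dirac states.
The spin index `σ : Bool` encodes `↑ = true`, `↓ = false`. -/
theorem stmt_14 (ε : Bool → ℝ → ℝ) (e : Bool → ℝ → Fin 2 → ℂ)
    (hεper : ∀ σ, Function.Periodic (ε σ) 1)
    (heper : ∀ σ, Function.Periodic (e σ) 1)
    (hε : ∀ σ k, ε σ k ∈ Set.Ioo (0:ℝ) 1)
    (hnorm : ∀ σ k, inn (e σ k) (e σ k) = 1)
    (horth : ∀ k, inn (e true k) (e false k) = 0)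
    (hzero : ∀ k₁ k₂ k₃ k₄ : ℝ, (∃ m : ℤ, k₁ + k₂ - k₃ - k₄ = m) →
      ω k₁ + ω k₂ = ω k₃ + ω k₄ →
      ∀ σ₁ σ₂ σ₃ σ₄ : Bool,
        (Real.log ((1 - ε σ₁ k₁) / ε σ₁ k₁) + Real.log ((1 - ε σ₂ k₂) / ε σ₂ k₂)
          = Real.log ((1 - ε σ₃ k₃) / ε σ₃ k₃) + Real.log ((1 - ε σ₄ k₄) / ε σ₄ k₄)) ∨
        inn (e σ₁ k₁) (e σ₃ k₃) * inn (e σ₂ k₂) (e σ₄ k₄)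
          = inn (e σ₁ k₁) (e σ₄ k₄) * inn (e σ₂ k₂) (e σ₃ k₃)) :
    ∃ (w : Bool → Fin 2 → ℂ) (a : Bool → ℝ) (f : ℝ → ℝ),
      (∀ σ, inn (w σ) (w σ) = 1) ∧ inn (w true) (w false) = 0 ∧
      Function.Periodic f 1 ∧ (∀ k : ℝ, f k = -f (1/2 - k)) ∧
      ∀ k : ℝ,
        (ε true k : ℂ) • outer (e true k) + (ε false k : ℂ) • outer (e false k)
          = ((Real.exp (f k - a true) + 1)⁻¹ : ℂ) • outer (w true)
            + ((Real.exp (f k - a false) + 1)⁻¹ : ℂ) • outer (w false) := by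
  by_cases hS : ∀ k, ε true k = ε false k
  · -- degenerate case : both eigenvalue functions coincide, W(k) is scalar
    have hΦs : ∀ (σ : Bool) (x : ℝ),
        Real.log ((1 - ε σ x) / ε σ x) = Real.log ((1 - ε true x) / ε true x) := by
      intro σ x
      cases σ
      · rw [hS x]
      · rfl
    have PS : ∀ k : ℝ, Real.log ((1 - ε true k) / ε true k)
        + Real.log ((1 - ε true (1/2 - k)) / ε true (1/2 - k))
        = Real.log ((1 - ε true 0) / ε true 0)
          + Real.log ((1 - ε true (1/2 - 0)) / ε true (1/2 - 0)) := by
      intro k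
      obtain ⟨σ₁, σ₂, σ₃, σ₄, hbad⟩ := exists_badspin (fun σ => e σ k) (fun σ => e σ (1/2 - k))
        (fun σ => e σ 0) (fun σ => e σ (1/2 - 0))
        (fun σ => hnorm σ k) (horth k) (fun σ => hnorm σ (1/2 - k)) (horth (1/2 - k))
        (fun σ => hnorm σ 0) (horth 0) (fun σ => hnorm σ (1/2 - 0)) (horth (1/2 - 0))
      rcases hzero k (1/2 - k) 0 (1/2 - 0) ⟨0, by push_cast; ring⟩
        (by rw [omega_pair k, omega_pair 0]) σ₁ σ₂ σ₃ σ₄ with hc | hc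
      · rw [hΦs σ₁ k, hΦs σ₂ (1/2 - k), hΦs σ₃ 0, hΦs σ₄ (1/2 - 0)] at hc
        exact hc
      · exact absurd hc hbad
    set K : ℝ := Real.log ((1 - ε true 0) / ε true 0)
      + Real.log ((1 - ε true (1/2 - 0)) / ε true (1/2 - 0)) with hKdef
    refine ⟨fun σ => e σ 0, fun _ => -K/2,
      fun k => Real.log ((1 - ε true k) / ε true k) - K/2,
      fun σ => hnorm σ 0, horth 0, ?_, ?_, ?_⟩
    · intro k
      simp only
      rw [hεper true k]
    · intro k
      simp only
      linarith [PS k]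
    · intro k
      simp only
      have h1 : (Real.exp ((Real.log ((1 - ε true k) / ε true k) - K/2) - (-K/2)) + 1)⁻¹
          = ε true k := by
        rw [show (Real.log ((1 - ε true k) / ε true k) - K/2) - (-K/2)
          = Real.log ((1 - ε true k) / ε true k) by ring]
        exact eps_inv (hε true k)
      rw [cast_inv_eq h1, ← hS k, ← smul_add, ← smul_add,
        complete _ _ (hnorm true k) (hnorm false k) (horth k),
        complete _ _ (hnorm true 0) (hnorm false 0) (horth 0)]
  · -- non-degenerate case : at some point the eigenvalues differ
    push_neg at hS
    obtain ⟨p₀, hp₀⟩ := hS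
    have hwuu : inn (e true p₀) (e true p₀) = 1 := hnorm true p₀
    have hwff : inn (e false p₀) (e false p₀) = 1 := hnorm false p₀
    have hwtf : inn (e true p₀) (e false p₀) = 0 := horth p₀
    have hwft : inn (e false p₀) (e true p₀) = 0 := by rw [inn_conj, hwtf, star_zero]
    set Δ₀ : ℝ := Real.log ((1 - ε true p₀) / ε true p₀)
      - Real.log ((1 - ε false p₀) / ε false p₀) with hΔdef
    have hΔ₀ : Δ₀ ≠ 0 := by
      intro h0
      rw [hΔdef, sub_eq_zero] at h0
      exact hp₀ (phi_inj (hε true p₀) (hε false p₀) h0)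
    have hPkg : ∀ k : ℝ, ∃ t : Bool,
        (∃ c : ℂ, e true k = c • e t p₀) ∧ (∃ c : ℂ, e false k = c • e (!t) p₀) ∧
        (Real.log ((1 - ε t k) / ε t k) - Real.log ((1 - ε (!t) k) / ε (!t) k) = Δ₀) := by
      intro k
      have G1par : inn (e true p₀) (e true k) * inn (e false k) (e false p₀) = 0 →
          (∃ c : ℂ, e true k = c • e false p₀) ∧ (∃ c : ℂ, e false k = c • e true p₀) := by
        intro G1
        rcases mul_eq_zero.mp G1 with h' | h'
        · exact perp_align (e true p₀) (e false p₀) (e true k) (e false k)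
            hwuu hwff hwtf (hnorm true k) (hnorm false k) (horth k) h'
        · have h'' : inn (e false p₀) (e false k) = 0 := by rw [inn_conj, h', star_zero]
          have h3 := perp_align (e false p₀) (e true p₀) (e false k) (e true k)
            hwff hwuu hwft (hnorm false k) (hnorm true k)
            (by rw [inn_conj, horth k, star_zero]) h''
          exact ⟨h3.2, h3.1⟩
      have G2par : inn (e true p₀) (e false k) * inn (e true k) (e false p₀) = 0 →
          (∃ c : ℂ, e true k = c • e true p₀) ∧ (∃ c : ℂ, e false k = c • e false p₀) := by
        intro G2
        rcases mul_eq_zero.mp G2 with h' | h'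
        · have h3 := perp_align (e true p₀) (e false p₀) (e false k) (e true k)
            hwuu hwff hwtf (hnorm false k) (hnorm true k)
            (by rw [inn_conj, horth k, star_zero]) h'
          exact ⟨h3.2, h3.1⟩
        · have h'' : inn (e false p₀) (e true k) = 0 := by rw [inn_conj, h', star_zero]
          exact perp_align (e false p₀) (e true p₀) (e true k) (e false k)
            hwff hwuu hwft (hnorm true k) (hnorm false k) (horth k) h''
      have I1 := hzero p₀ k k p₀ ⟨0, by push_cast; ring⟩ (by ring) true false true false
      have I2 := hzero p₀ k k p₀ ⟨0, by push_cast; ring⟩ (by ring) true true false false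
      rw [hwtf, zero_mul] at I1
      rw [hwtf, zero_mul] at I2
      rcases I1 with A | G1
      · rcases I2 with B | G2
        · exfalso
          apply hΔ₀
          rw [hΔdef]
          linarith
        · obtain ⟨hpar1, hpar2⟩ := G2par G2
          exact ⟨true, hpar1, hpar2, by rw [hΔdef]; simp only [Bool.not_true]; linarith⟩
      · rcases I2 with B | G2
        · obtain ⟨hpar1, hpar2⟩ := G1par G1
          exact ⟨false, hpar1, hpar2, by rw [hΔdef]; simp only [Bool.not_false]; linarith⟩
        · exfalso
          obtain ⟨c, hc⟩ := (G1par G1).1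
          obtain ⟨d, hd⟩ := (G2par G2).1
          exact par_perp hwtf (hnorm true k) hd hc
    choose T hT1 hT2 hT3 using hPkg
    have htop : ∀ k, ∃ c : ℂ, e (T k) k = c • e true p₀ := by
      intro k
      cases hb : T k with
      | true =>
        have h := hT1 k
        rw [hb] at h
        exact h
      | false =>
        have h := hT2 k
        rw [hb] at h
        simp only [Bool.not_false] at h
        exact h
    have hbot : ∀ k, ∃ c : ℂ, e (!(T k)) k = c • e false p₀ := by
      intro k
      cases hb : T k with
      | true =>
        have h := hT2 k
        rw [hb] at h
        simp only [Bool.not_true] at h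
        exact h
      | false =>
        have h := hT1 k
        rw [hb] at h
        exact h
    have hTper : ∀ k, T (k + 1) = T k := by
      intro k
      by_contra hne
      obtain ⟨c, hc⟩ := hT1 (k + 1)
      obtain ⟨d, hd⟩ := hT1 k
      rw [heper true k] at hc
      have hb' : T (k + 1) = !(T k) := by
        cases hb : T k <;> cases hb2 : T (k + 1) <;>
          first
            | rfl
            | exact absurd (hb2.trans hb.symm) hne
      rw [hb'] at hc
      cases hb : T k with
      | false =>
        rw [hb] at hc hd
        simp only [Bool.not_false] at hc
        exact par_perp hwtf (hnorm true k) hc hd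
      | true =>
        rw [hb] at hc hd
        simp only [Bool.not_true] at hc
        exact par_perp hwtf (hnorm true k) hd hc
    have hpair : ∀ k k' : ℝ,
        Real.log ((1 - ε (T k) k) / ε (T k) k)
          + Real.log ((1 - ε (!(T (1/2 - k))) (1/2 - k)) / ε (!(T (1/2 - k))) (1/2 - k))
        = Real.log ((1 - ε (T k') k') / ε (T k') k')
          + Real.log ((1 - ε (!(T (1/2 - k'))) (1/2 - k')) / ε (!(T (1/2 - k'))) (1/2 - k')) := by
      intro k k'
      obtain ⟨c₁, hc₁⟩ := htop k
      obtain ⟨c₂, hc₂⟩ := hbot (1/2 - k)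
      obtain ⟨c₃, hc₃⟩ := htop k'
      obtain ⟨c₄, hc₄⟩ := hbot (1/2 - k')
      rcases hzero k (1/2 - k) k' (1/2 - k') ⟨0, by push_cast; ring⟩
        (by rw [omega_pair k, omega_pair k'])
        (T k) (!(T (1/2 - k))) (T k') (!(T (1/2 - k'))) with h | h
      · exact h
      · exfalso
        have h1 := smul_ne_zero_vec (hnorm (T k) k) hwuu hc₁
        have h2 := smul_ne_zero_vec (hnorm (!(T (1/2 - k))) (1/2 - k)) hwff hc₂
        have h3 := smul_ne_zero_vec (hnorm (T k') k') hwuu hc₃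
        have h4 := smul_ne_zero_vec (hnorm (!(T (1/2 - k'))) (1/2 - k')) hwff hc₄
        rw [hc₁, hc₂, hc₃, hc₄] at h
        simp only [inn_smul_left, inn_smul_right, hwuu, hwff, hwtf, hwft,
          mul_one, mul_zero, zero_mul, mul_eq_zero, star_eq_zero] at h
        tauto
    set K : ℝ := Real.log ((1 - ε (T 0) 0) / ε (T 0) 0)
      + Real.log ((1 - ε (!(T (1/2 - 0))) (1/2 - 0)) / ε (!(T (1/2 - 0))) (1/2 - 0)) with hKdef
    refine ⟨fun σ => e σ p₀,
      fun σ => cond σ (-(K + Δ₀)/2) (Δ₀ - (K + Δ₀)/2),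
      fun k => Real.log ((1 - ε (T k) k) / ε (T k) k) - (K + Δ₀)/2,
      fun σ => hnorm σ p₀, horth p₀, ?_, ?_, ?_⟩
    · intro k
      simp only
      rw [hεper (T (k + 1)) k, hTper k]
    · intro k
      simp only
      have := hpair k 0
      have h2 := hT3 (1/2 - k)
      linarith
    · intro k
      simp only [cond_true, cond_false]
      have h1 : (Real.exp ((Real.log ((1 - ε (T k) k) / ε (T k) k) - (K + Δ₀)/2)
          - (-(K + Δ₀)/2)) + 1)⁻¹ = ε (T k) k := by
        rw [show (Real.log ((1 - ε (T k) k) / ε (T k) k) - (K + Δ₀)/2) - (-(K + Δ₀)/2)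
          = Real.log ((1 - ε (T k) k) / ε (T k) k) by ring]
        exact eps_inv (hε (T k) k)
      have h2 : (Real.exp ((Real.log ((1 - ε (T k) k) / ε (T k) k) - (K + Δ₀)/2)
          - (Δ₀ - (K + Δ₀)/2)) + 1)⁻¹ = ε (!(T k)) k := by
        rw [show (Real.log ((1 - ε (T k) k) / ε (T k) k) - (K + Δ₀)/2) - (Δ₀ - (K + Δ₀)/2)
          = Real.log ((1 - ε (T k) k) / ε (T k) k) - Δ₀ by ring,
          show Real.log ((1 - ε (T k) k) / ε (T k) k) - Δ₀
          = Real.log ((1 - ε (!(T k)) k) / ε (!(T k)) k) by linarith [hT3 k]]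
        exact eps_inv (hε (!(T k)) k)
      rw [cast_inv_eq h1, cast_inv_eq h2]
      obtain ⟨c, hc⟩ := hT1 k
      obtain ⟨d, hd⟩ := hT2 k
      rw [hc, outer_smul (unit_coeff (hnorm true k) (hnorm (T k) p₀) hc),
        hd, outer_smul (unit_coeff (hnorm false k) (hnorm (!(T k)) p₀) hd)]
      cases hb : T k with
      | true =>
        simp only [hb, Bool.not_true]
      | false =>
        simp only [hb, Bool.not_false]
        rw [add_comm]
end

section
/- Generalized Fermi-Dirac states have vanishing entropy-production integrand: Let ω(k) = 1 − cos(2πk), let (w↑, w↓) be an orthonormal basis of ℂ², a↑, a↓ ∈ ℝ, and f : ℝ → ℝ a 1-periodic function with f(k) = −f(1/2 − k) for all k. Set λ_σ(k) = (e^{f(k) − a_σ} + 1)^{−1} and λ̃_σ(k) = 1 − λ_σ(k). Then for all real k₁, k₂, k₃, k₄ with k₁ + k₂ − k₃ − k₄ ∈ ℤ and ω(k₁) + ω(k₂) = ω(k₃) + ω(k₄), and all σ₁, σ₂, σ₃, σ₄ ∈ {↑,↓}, writing λᵢ = λ_{σᵢ}(kᵢ): (λ̃₁λ̃₂λ₃λ₄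 − λ₁λ₂λ̃₃λ̃₄) · |⟨w_{σ₁}, w_{σ₃}⟩⟨w_{σ₂}, w_{σ₄}⟩ − ⟨w_{σ₁}, w_{σ₄}⟩⟨w_{σ₂}, w_{σ₃}⟩|² = 0. -/
open Real in
/-- Collision invariant: any 1-periodic `f` with `f k = -f (1/2 - k)` is conserved
by kinematically allowed collisions. -/
lemma fsum_eq (f : ℝ → ℝ) (hper : Function.Periodic f 1)
    (hsym : ∀ k : ℝ, f k = -f (1/2 - k))
    (k₁ k₂ k₃ k₄ : ℝ) (m : ℤ) (hm : k₁ + k₂ - k₃ - k₄ = m)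
    (hen : Real.cos (2*π*k₁) + Real.cos (2*π*k₂)
          = Real.cos (2*π*k₃) + Real.cos (2*π*k₄)) :
    f k₁ + f k₂ = f k₃ + f k₄ := by
  have hFP : ∀ (x : ℝ) (n : ℤ), f (x + n) = f x := by
    intro x n
    simpa using (hper.int_mul n) x
  have h1 : Real.cos (2*π*k₁) + Real.cos (2*π*k₂)
      = 2 * Real.cos (π*(k₁+k₂)) * Real.cos (π*(k₁-k₂)) := by
    rw [show 2*π*k₁ = π*(k₁+k₂) + π*(k₁-k₂) by ring,
        show 2*π*k₂ = π*(k₁+k₂) - π*(k₁-k₂) by ring,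
        Real.cos_add, Real.cos_sub]; ring
  have h2 : Real.cos (2*π*k₃) + Real.cos (2*π*k₄)
      = 2 * Real.cos (π*(k₃+k₄)) * Real.cos (π*(k₃-k₄)) := by
    rw [show 2*π*k₃ = π*(k₃+k₄) + π*(k₃-k₄) by ring,
        show 2*π*k₄ = π*(k₃+k₄) - π*(k₃-k₄) by ring,
        Real.cos_add, Real.cos_sub]; ring
  have hA : Real.cos (π*(k₁+k₂)) = (-1)^m * Real.cos (π*(k₃+k₄)) := by
    rw [show π*(k₁+k₂) = π*(k₃+k₄) + m * π by
      have : k₁ + k₂ = k₃ + k₄ + m := by linarith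
      rw [this]; ring]
    exact Real.cos_add_int_mul_pi _ m
  have key : Real.cos (π*(k₃+k₄)) *
      ((-1:ℝ)^m * Real.cos (π*(k₁-k₂)) - Real.cos (π*(k₃-k₄))) = 0 := by
    rw [h1, h2, hA] at hen
    ring_nf at hen ⊢
    nlinarith [hen]
  have hπ : (π : ℝ) ≠ 0 := Real.pi_ne_zero
  rcases mul_eq_zero.mp key with hC | hBD
  · -- sums are ≡ 1/2 mod 1
    rw [Real.cos_eq_zero_iff] at hC
    obtain ⟨n, hn⟩ := hC
    have hsum3 : k₃ + k₄ = n + 1/2 := by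
      have : π * (k₃ + k₄) = π * ((n:ℝ) + 1/2) := by rw [hn]; ring
      exact mul_left_cancel₀ hπ this
    have hsum1 : k₁ + k₂ = (n + m : ℤ) + 1/2 := by push_cast; linarith
    have e2 : f k₂ = - f k₁ := by
      have hk : k₂ = (1/2 - k₁) + (n + m : ℤ) := by push_cast at hsum1 ⊢; linarith
      rw [hk, hFP, hsym (1/2 - k₁), show (1:ℝ)/2 - (1/2 - k₁) = k₁ by ring]
    have e4 : f k₄ = - f k₃ := by
      have hk : k₄ = (1/2 - k₃) + (n : ℤ) := by push_cast; linarith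
      rw [hk, hFP, hsym (1/2 - k₃), show (1:ℝ)/2 - (1/2 - k₃) = k₃ by ring]
    linarith [e2, e4]
  · -- momenta match pairwise mod 1
    have hcc : Real.cos (π*(k₁-k₂) + m * π) = Real.cos (π*(k₃-k₄)) := by
      rw [Real.cos_add_int_mul_pi]; linarith [hBD]
    rw [Real.cos_eq_cos_iff] at hcc
    obtain ⟨n, hn | hn⟩ := hcc
    · have hd : k₃ - k₄ = 2*n + (k₁ - k₂ + m) := by
        have : π * (k₃-k₄) = π * (2*(n:ℝ) + (k₁ - k₂ + m)) := by
          rw [hn]; ring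
        have := mul_left_cancel₀ hπ this
        linarith
      have e3 : f k₃ = f k₁ := by
        have : k₃ = k₁ + (n : ℤ) := by push_cast at hd ⊢; linarith
        rw [this, hFP]
      have e4 : f k₄ = f k₂ := by
        have : k₄ = k₂ + (-m - n : ℤ) := by push_cast; linarith
        rw [this, hFP]
      linarith [e3, e4]
    · have hd : k₃ - k₄ = 2*n - (k₁ - k₂ + m) := by
        have : π * (k₃-k₄) = π * (2*(n:ℝ) - (k₁ - k₂ + m)) := by
          rw [hn]; ring
        have := mul_left_cancel₀ hπ this
        linarith
      have e3 : f k₃ = f k₂ := by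
        have : k₃ = k₂ + (n - m : ℤ) := by push_cast; linarith
        rw [this, hFP]
      have e4 : f k₄ = f k₁ := by
        have : k₄ = k₁ + (-n : ℤ) := by push_cast; linarith
        rw [this, hFP]
      linarith [e3, e4]

/-- Detailed balance for Fermi-Dirac factors with equal exponent sums. -/
lemma fd_balance (x₁ x₂ x₃ x₄ : ℝ) (h : x₁ + x₂ = x₃ + x₄) :
    (1 - (Real.exp x₁ + 1)⁻¹) * (1 - (Real.exp x₂ + 1)⁻¹)
        * (Real.exp x₃ + 1)⁻¹ * (Real.exp x₄ + 1)⁻¹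
      - (Real.exp x₁ + 1)⁻¹ * (Real.exp x₂ + 1)⁻¹
        * (1 - (Real.exp x₃ + 1)⁻¹) * (1 - (Real.exp x₄ + 1)⁻¹) = 0 := by
  have hpos : ∀ x : ℝ, Real.exp x + 1 ≠ 0 := fun x => by positivity
  have h1 : ∀ x : ℝ, 1 - (Real.exp x + 1)⁻¹ = Real.exp x * (Real.exp x + 1)⁻¹ := by
    intro x
    field_simp
    ring
  rw [h1, h1, h1, h1]
  have he : Real.exp x₁ * Real.exp x₂ = Real.exp x₃ * Real.exp x₄ := by
    rw [← Real.exp_add, ← Real.exp_add, h]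
  linear_combination ((Real.exp x₁ + 1)⁻¹ * (Real.exp x₂ + 1)⁻¹ *
    (Real.exp x₃ + 1)⁻¹ * (Real.exp x₄ + 1)⁻¹) * he

/-- Generalized Fermi-Dirac states have vanishing entropy-production integrand.
The spin index `σ : Bool` encodes `↑ = true`, `↓ = false`. -/
theorem stmt_15 (w : Bool → Fin 2 → ℂ)
    (hnorm : ∀ σ, inn (w σ) (w σ) = 1) (horth : inn (w true) (w false) = 0)
    (a : Bool → ℝ) (f : ℝ → ℝ)
    (hper : Function.Periodic f 1) (hsym : ∀ k : ℝ, f k = -f (1/2 - k))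
    (lam : Bool → ℝ → ℝ) (hlam : ∀ σ k, lam σ k = (Real.exp (f k - a σ) + 1)⁻¹)
    (k₁ k₂ k₃ k₄ : ℝ) (hmom : ∃ m : ℤ, k₁ + k₂ - k₃ - k₄ = m)
    (hen : ω k₁ + ω k₂ = ω k₃ + ω k₄) (σ₁ σ₂ σ₃ σ₄ : Bool) :
    ((1 - lam σ₁ k₁) * (1 - lam σ₂ k₂) * lam σ₃ k₃ * lam σ₄ k₄
        - lam σ₁ k₁ * lam σ₂ k₂ * (1 - lam σ₃ k₃) * (1 - lam σ₄ k₄)) *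
      (‖inn (w σ₁) (w σ₃) * inn (w σ₂) (w σ₄)
        - inn (w σ₁) (w σ₄) * inn (w σ₂) (w σ₃)‖) ^ 2 = 0 := by
  obtain ⟨m, hm⟩ := hmom
  have hen' : Real.cos (2*Real.pi*k₁) + Real.cos (2*Real.pi*k₂)
      = Real.cos (2*Real.pi*k₃) + Real.cos (2*Real.pi*k₄) := by
    simp only [ω] at hen; linarith
  have hf := fsum_eq f hper hsym k₁ k₂ k₃ k₄ m hm hen'
  -- orthogonality gives δ form of inner products
  have horth' : inn (w false) (w true) = 0 := by
    have hc : inn (w false) (w true) = star (inn (w true) (w false)) := by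
      simp [inn, Finset.sum_comm, star_sum, mul_comm]
    rw [hc, horth, star_zero]
  have hdelta : ∀ σ τ : Bool, inn (w σ) (w τ) = if σ = τ then 1 else 0 := by
    intro σ τ
    cases σ <;> cases τ <;> simp [hnorm, horth, horth']
  -- helper: when the spin multisets match, the scalar factor vanishes
  have hscal : a σ₁ + a σ₂ = a σ₃ + a σ₄ →
      (1 - lam σ₁ k₁) * (1 - lam σ₂ k₂) * lam σ₃ k₃ * lam σ₄ k₄
        - lam σ₁ k₁ * lam σ₂ k₂ * (1 - lam σ₃ k₃) * (1 - lam σ₄ k₄) = 0 := by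
    intro ha
    rw [hlam, hlam, hlam, hlam]
    exact fd_balance _ _ _ _ (by linarith)
  cases σ₁ <;> cases σ₂ <;> cases σ₃ <;> cases σ₄ <;>
    first
      | (simp only [hdelta]; norm_num; done)
      | (simp only [hdelta]; norm_num; exact hscal (by ring))
end

section
/- Generalized Fermi-Dirac states annihilate the dissipative collision integrand pointwise: Let ω(k) = 1 − cos(2πk), let (w↑, w↓) be an orthonormal basis of ℂ², a↑, a↓ ∈ ℝ, and f : ℝ → ℝ a 1-periodic function with f(k) = −f(1/2 − k) for all k. Define the 2×2 matrix W_st(k) = Σ_{σ∈{↑,↓}} (e^{f(k) − a_σ} + 1)^{−1} · w_σ w_σ*, and for 2×2 matrices set W̃ = 1 − W, A_quad(W₁,W₂,W₃,W₄) = −W̃₁W₃W̃₂W₄ − W₄W̃₂W₃W̃₁ + W₁W̃₃W₂W̃₄ + W̃₄W₂W̃₃W₁, A_tr(W₁,W₂,W₃,W₄) = (W̃₁W₃ + W₃W̃₁)·tr(W̃₂W₄) − (W₁W̃₃ + W̃₃W₁)·tr(W₂W̃₄). Then for all real k₁, k₂, k₃, k₄ with k₁ + k₂ − k₃ − k₄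 ∈ ℤ and ω(k₁) + ω(k₂) = ω(k₃) + ω(k₄), with Wᵢ = W_st(kᵢ): A_quad(W₁,W₂,W₃,W₄) = 0 and A_tr(W₁,W₂,W₃,W₄) = 0. -/
/-- The quadratic part of the symmetrized dissipative collision integrand. -/
noncomputable def Aquad (W₁ W₂ W₃ W₄ : Matrix (Fin 2) (Fin 2) ℂ) : Matrix (Fin 2) (Fin 2) ℂ :=
  -((1 - W₁) * W₃ * (1 - W₂) * W₄) - W₄ * (1 - W₂) * W₃ * (1 - W₁)
    + W₁ * (1 - W₃) * W₂ * (1 - W₄) + (1 - W₄) * W₂ * (1 - W₃) * W₁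

/-- The trace part of the symmetrized dissipative collision integrand. -/
noncomputable def Atr (W₁ W₂ W₃ W₄ : Matrix (Fin 2) (Fin 2) ℂ) : Matrix (Fin 2) (Fin 2) ℂ :=
  ((1 - W₂) * W₄).trace • ((1 - W₁) * W₃ + W₃ * (1 - W₁))
    - (W₂ * (1 - W₄)).trace • (W₁ * (1 - W₃) + (1 - W₃) * W₁)

open Real Matrix in
/-- Key scalar Fermi-Dirac identity. -/
lemma keyFD (e₁ e₂ e₃ e₄ : ℂ) (h₁ : e₁+1 ≠ 0) (h₂ : e₂+1 ≠ 0) (h₃ : e₃+1 ≠ 0)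
    (h₄ : e₄+1 ≠ 0) (hp : e₁ * e₂ = e₃ * e₄) :
    (1-(e₁+1)⁻¹) * (e₃+1)⁻¹ * ((1-(e₂+1)⁻¹) * (e₄+1)⁻¹)
      = (e₁+1)⁻¹ * (1-(e₃+1)⁻¹) * ((e₂+1)⁻¹ * (1-(e₄+1)⁻¹)) := by
  field_simp
  linear_combination hp

section DmSection
open Matrix

variable (w : Bool → Fin 2 → ℂ)

/-- Matrices diagonal in the common eigenbasis. -/
noncomputable def Dm (x y : ℂ) : Matrix (Fin 2) (Fin 2) ℂ :=
  x • outer (w true) + y • outer (w false)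

variable {w}

lemma outer_mul_outer (u v : Fin 2 → ℂ) :
    outer u * outer v = inn u v • Matrix.of (fun i j => u i * star (v j)) := by
  ext i j
  simp [outer, inn, Matrix.mul_apply, Fin.sum_univ_two, Matrix.smul_apply]
  ring

variable (hnorm : ∀ σ, inn (w σ) (w σ) = 1) (horth : inn (w true) (w false) = 0)

include hnorm horth in
lemma PP : ∀ σ τ, outer (w σ) * outer (w τ) = if σ = τ then outer (w σ) else 0 := by
  have horth' : inn (w false) (w true) = 0 := by
    have := congrArg star horth
    simpa [inn, Fin.sum_univ_two, star_sum, mul_comm] using this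
  intro σ τ
  rw [outer_mul_outer]
  rcases σ <;> rcases τ <;> simp [hnorm, horth, horth'] <;> rfl

include hnorm horth in
lemma P_sum : outer (w true) + outer (w false) = 1 := by
  have hn1 : (starRingEnd ℂ) (w true 0) * w true 0 + (starRingEnd ℂ) (w true 1) * w true 1 = 1 := by
    simpa [inn, Fin.sum_univ_two, Complex.star_def] using hnorm true
  have hn0 : (starRingEnd ℂ) (w false 0) * w false 0 + (starRingEnd ℂ) (w false 1) * w false 1 = 1 := by
    simpa [inn, Fin.sum_univ_two, Complex.star_def] using hnorm false
  have ho : (starRingEnd ℂ) (w true 0) * w false 0 + (starRingEnd ℂ) (w true 1) * w false 1 = 0 := by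
    simpa [inn, Fin.sum_univ_two, Complex.star_def] using horth
  have ho' : (starRingEnd ℂ) (w false 0) * w true 0 + (starRingEnd ℂ) (w false 1) * w true 1 = 0 := by
    have := congrArg star horth
    simpa [inn, Fin.sum_univ_two, star_sum, mul_comm, Complex.star_def] using this
  set A : Matrix (Fin 2) (Fin 2) ℂ :=
    Matrix.of (fun i j => if j = 0 then w true i else w false i) with hA
  have h1 : Aᴴ * A = 1 := by
    ext i j
    fin_cases i <;> fin_cases j <;>
      simp [A, Matrix.mul_apply, Matrix.conjTranspose_apply, Fin.sum_univ_two,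
        Matrix.one_apply, Complex.star_def] <;>
      first
        | linear_combination hn1
        | linear_combination hn0
        | linear_combination ho
        | linear_combination ho'
  have h2 : A * Aᴴ = 1 := mul_eq_one_comm.mp h1
  ext i j
  have := congrFun (congrFun h2 i) j
  simp only [Matrix.add_apply, outer, Matrix.of_apply]
  rw [← this]
  simp [A, Matrix.mul_apply, Matrix.conjTranspose_apply, Fin.sum_univ_two,
    Complex.star_def]
  try ring

include hnorm in
lemma outer_trace : ∀ σ, (outer (w σ)).trace = 1 := by
  intro σ
  have := hnorm σ
  simp only [inn, Fin.sum_univ_two, Complex.star_def] at this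
  simp [Matrix.trace, Matrix.diag, outer, Fin.sum_univ_two]
  linear_combination this

variable (hPP : ∀ σ τ, outer (w σ) * outer (w τ) = if σ = τ then outer (w σ) else 0)
  (hPsum : outer (w true) + outer (w false) = 1)
  (htr : ∀ σ, (outer (w σ)).trace = 1)

include hPP in
lemma Dm_mul (x y x' y' : ℂ) : Dm w x y * Dm w x' y' = Dm w (x*x') (y*y') := by
  simp only [Dm, add_mul, mul_add, smul_mul_assoc, mul_smul_comm, hPP]
  simp [smul_smul, mul_comm]

include hPsum in
lemma Dm_one : (1 : Matrix (Fin 2) (Fin 2) ℂ) = Dm w 1 1 := by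
  simp [Dm, hPsum]

lemma Dm_add (x y x' y' : ℂ) : Dm w x y + Dm w x' y' = Dm w (x+x') (y+y') := by
  simp only [Dm, add_smul]; abel

lemma Dm_sub (x y x' y' : ℂ) : Dm w x y - Dm w x' y' = Dm w (x-x') (y-y') := by
  simp only [Dm, sub_smul]; abel

lemma Dm_neg (x y : ℂ) : -Dm w x y = Dm w (-x) (-y) := by
  simp only [Dm, neg_smul]; abel

lemma Dm_smul (c x y : ℂ) : c • Dm w x y = Dm w (c*x) (c*y) := by
  simp [Dm, smul_smul, smul_add]

include htr in
lemma Dm_trace (x y : ℂ) : (Dm w x y).trace = x + y := by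
  simp [Dm, Matrix.trace_add, Matrix.trace_smul, htr]

lemma Dm_eq_zero {x y : ℂ} (hx : x = 0) (hy : y = 0) : Dm w x y = 0 := by
  simp [Dm, hx, hy]

end DmSection

open Real in
lemma fsum (f : ℝ → ℝ) (hper : Function.Periodic f 1) (hsym : ∀ k : ℝ, f k = -f (1/2 - k))
    (k₁ k₂ k₃ k₄ : ℝ) (hmom : ∃ m : ℤ, k₁ + k₂ - k₃ - k₄ = m)
    (hen : ω k₁ + ω k₂ = ω k₃ + ω k₄) :
    f k₁ + f k₂ = f k₃ + f k₄ := by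
  obtain ⟨m, hm⟩ := hmom
  have hint : ∀ (x : ℝ) (n : ℤ), f (x + n) = f x := by
    intro x n
    simpa using hper.sub_int_mul_eq (x := x) (-n)
  have hcos : Real.cos (2*π*k₁) + Real.cos (2*π*k₂)
      = Real.cos (2*π*k₃) + Real.cos (2*π*k₄) := by
    unfold ω at hen; linarith
  have e₁ : Real.cos (2*π*k₁) + Real.cos (2*π*k₂)
      = 2 * Real.cos (π*(k₁+k₂)) * Real.cos (π*(k₁-k₂)) := by
    rw [show 2*π*k₁ = π*(k₁+k₂) + π*(k₁-k₂) by ring,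
      show 2*π*k₂ = π*(k₁+k₂) - π*(k₁-k₂) by ring, Real.cos_add, Real.cos_sub]
    ring
  have e₂ : Real.cos (2*π*k₃) + Real.cos (2*π*k₄)
      = 2 * Real.cos (π*(k₃+k₄)) * Real.cos (π*(k₃-k₄)) := by
    rw [show 2*π*k₃ = π*(k₃+k₄) + π*(k₃-k₄) by ring,
      show 2*π*k₄ = π*(k₃+k₄) - π*(k₃-k₄) by ring, Real.cos_add, Real.cos_sub]
    ring
  have hS : Real.cos (π*(k₃+k₄)) = (-1:ℝ)^(-m) * Real.cos (π*(k₁+k₂)) := by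
    rw [show π*(k₃+k₄) = π*(k₁+k₂) + (-m : ℤ) * π by push_cast; linear_combination (-π) * hm]
    exact Real.cos_add_int_mul_pi _ _
  rw [e₁, e₂, hS] at hcos
  by_cases hzero : Real.cos (π*(k₁+k₂)) = 0
  · have h34 : Real.cos (π*(k₃+k₄)) = 0 := by rw [hS, hzero]; ring
    obtain ⟨n, hn⟩ := Real.cos_eq_zero_iff.mp hzero
    obtain ⟨n', hn'⟩ := Real.cos_eq_zero_iff.mp h34
    have hk12 : k₁ + k₂ = n + 1/2 := by
      refine mul_left_cancel₀ Real.pi_ne_zero ?_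
      rw [hn]; ring
    have hk34 : k₃ + k₄ = n' + 1/2 := by
      refine mul_left_cancel₀ Real.pi_ne_zero ?_
      rw [hn']; ring
    have h1 : f k₁ = - f k₂ := by
      rw [show k₁ = (1/2 - k₂) + (n:ℤ) by push_cast; linarith, hint]
      linarith [hsym k₂]
    have h2 : f k₃ = - f k₄ := by
      rw [show k₃ = (1/2 - k₄) + (n':ℤ) by push_cast; linarith, hint]
      linarith [hsym k₄]
    linarith
  · have h2' : (2*Real.cos (π*(k₁+k₂))) * Real.cos (π*(k₁-k₂))
        = (2*Real.cos (π*(k₁+k₂))) * ((-1:ℝ)^(-m) * Real.cos (π*(k₃-k₄))) := by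
      linear_combination hcos
    have hD := mul_left_cancel₀ (mul_ne_zero two_ne_zero hzero) h2'
    have hD' : Real.cos (π*(k₁-k₂)) = Real.cos (π*(k₃-k₄) + (-m:ℤ)*π) := by
      rw [Real.cos_add_int_mul_pi]; exact hD
    obtain ⟨j, hj | hj⟩ := Real.cos_eq_cos_iff.mp hD'
    · have hd : k₃ - k₄ - m = 2*j + (k₁ - k₂) := by
        refine mul_left_cancel₀ Real.pi_ne_zero ?_
        push_cast at hj ⊢; linear_combination hj
      have h3 : f k₃ = f k₁ := by
        rw [show k₃ = k₁ + (j : ℤ) by push_cast; linarith, hint]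
      have h4 : f k₄ = f k₂ := by
        rw [show k₄ = k₂ + (-j - m : ℤ) by push_cast; linarith, hint]
      linarith
    · have hd : k₃ - k₄ - m = 2*j - (k₁ - k₂) := by
        refine mul_left_cancel₀ Real.pi_ne_zero ?_
        push_cast at hj ⊢; linear_combination hj
      have h3 : f k₃ = f k₂ := by
        rw [show k₃ = k₂ + (j : ℤ) by push_cast; linarith, hint]
      have h4 : f k₄ = f k₁ := by
        rw [show k₄ = k₁ + (-j - m : ℤ) by push_cast; linarith, hint]
      linarith

set_option maxHeartbeats 4000000 in
/-- Generalized Fermi-Dirac states annihilate the dissipative collision integrand pointwise.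
The spin index `σ : Bool` encodes `↑ = true`, `↓ = false`. -/
theorem stmt_16 (w : Bool → Fin 2 → ℂ)
    (hnorm : ∀ σ, inn (w σ) (w σ) = 1) (horth : inn (w true) (w false) = 0)
    (a : Bool → ℝ) (f : ℝ → ℝ)
    (hper : Function.Periodic f 1) (hsym : ∀ k : ℝ, f k = -f (1/2 - k))
    (Wst : ℝ → Matrix (Fin 2) (Fin 2) ℂ)
    (hWst : ∀ k, Wst k = ((Real.exp (f k - a true) + 1)⁻¹ : ℂ) • outer (w true)
      + ((Real.exp (f k - a false) + 1)⁻¹ : ℂ) • outer (w false))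
    (k₁ k₂ k₃ k₄ : ℝ) (hmom : ∃ m : ℤ, k₁ + k₂ - k₃ - k₄ = m)
    (hen : ω k₁ + ω k₂ = ω k₃ + ω k₄) :
    Aquad (Wst k₁) (Wst k₂) (Wst k₃) (Wst k₄) = 0 ∧
    Atr (Wst k₁) (Wst k₂) (Wst k₃) (Wst k₄) = 0 := by
  have hPP := PP hnorm horth
  have hPsum := P_sum hnorm horth
  have htr := outer_trace hnorm
  have hf : f k₁ + f k₂ = f k₃ + f k₄ := fsum f hper hsym k₁ k₂ k₃ k₄ hmom hen
  -- scalar data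
  obtain ⟨E, hE⟩ : ∃ E : ℝ → Bool → ℂ, E = fun k σ => ((Real.exp (f k - a σ) : ℝ) : ℂ) :=
    ⟨_, rfl⟩
  have hne : ∀ k σ, E k σ + 1 ≠ 0 := by
    intro k σ
    rw [hE]
    rw [show ((Real.exp (f k - a σ) : ℝ) : ℂ) + 1 = ((Real.exp (f k - a σ) + 1 : ℝ) : ℂ) by
      push_cast; ring]
    rw [Complex.ofReal_ne_zero]
    positivity
  have hp : ∀ σ τ, E k₁ σ * E k₂ τ = E k₃ σ * E k₄ τ := by
    intro σ τ
    rw [hE]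
    push_cast [← Complex.ofReal_mul, ← Real.exp_add]
    norm_cast
    rw [← Real.exp_add, ← Real.exp_add]
    congr 1
    linarith
  have K : ∀ σ τ,
      (1-(E k₁ σ+1)⁻¹) * (E k₃ σ+1)⁻¹ * ((1-(E k₂ τ+1)⁻¹) * (E k₄ τ+1)⁻¹)
        = (E k₁ σ+1)⁻¹ * (1-(E k₃ σ+1)⁻¹) * ((E k₂ τ+1)⁻¹ * (1-(E k₄ τ+1)⁻¹)) :=
    fun σ τ => keyFD _ _ _ _ (hne k₁ σ) (hne k₂ τ) (hne k₃ σ) (hne k₄ τ) (hp σ τ)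
  -- diagonal form
  have hW : ∀ k, Wst k = Dm w (E k true + 1)⁻¹ (E k false + 1)⁻¹ := by
    intro k; rw [hWst k, hE]; rfl
  have hone := Dm_one (w := w) hPsum
  constructor
  · unfold Aquad
    rw [hW k₁, hW k₂, hW k₃, hW k₄]
    simp only [hone, Dm_sub, Dm_mul hPP, Dm_neg, Dm_add]
    refine Dm_eq_zero ?_ ?_
    · linear_combination (-2 : ℂ) * K true true
    · linear_combination (-2 : ℂ) * K false false
  · unfold Atr
    rw [hW k₁, hW k₂, hW k₃, hW k₄]
    simp only [hone, Dm_sub, Dm_mul hPP, Dm_add, Dm_trace htr, Dm_smul]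
    refine Dm_eq_zero ?_ ?_
    · linear_combination (2 : ℂ) * K true true + (2 : ℂ) * K true false
    · linear_combination (2 : ℂ) * K false false + (2 : ℂ) * K false true
end
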